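/- arXiv:1106.5387 — 7 statements merged into one kernel-verified Lean document; each statement's English description precedes it below -/
import Mathlib

section
/- (Lemma 3.) Fix integers n ≥ 1, 0 ≤ k ≤ n and m ≥ 1. There exists a constant C, depending only on n, m and k (not on q or the subspace), such that for every prime power q, every finite field F with |F| = q, and every k-dimensional subspace Π_k of F^n, the following holds: if Π is the span of m vectors chosen independently and uniformly at random from F^n, then Prob[ dim(Π ∩ Π_k) = max(min(m,n) + k − n, 0) ] ≥ 1 − C/q. -/
set_option maxHeartbeats 1000000

open scoped Classical

lemma aux_sup_span {F V : Type*} [Field F] [AddCommGroup V] [Module F V]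
    [FiniteDimensional F V] (S : Submodule F V) {x : V} (hx : x ∉ S) :
    Module.finrank F ↥(S ⊔ Submodule.span F {x}) = Module.finrank F ↥S + 1 := by
  have hx0 : x ≠ 0 := fun h => hx (h ▸ S.zero_mem)
  have hinf : S ⊓ Submodule.span F {x} = ⊥ := by
    rw [eq_bot_iff]
    intro y hy
    obtain ⟨hyS, hysp⟩ := Submodule.mem_inf.mp hy
    obtain ⟨c, rfl⟩ := Submodule.mem_span_singleton.mp hysp
    rcases eq_or_ne c 0 with rfl | hc
    · simp
    · exact absurd (by simpa [smul_smul, inv_mul_cancel₀ hc] using S.smul_mem c⁻¹ hyS) hx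
  have h := Submodule.finrank_sup_add_finrank_inf_eq S (Submodule.span F {x})
  rw [hinf, finrank_span_singleton hx0] at h
  simpa using h

lemma key_lemma {n k m : ℕ} (hk : k ≤ n) {F : Type} [Field F]
    (Sk : Submodule F (Fin n → F)) (hSk : Module.finrank F ↥Sk = k)
    (v : Fin m → Fin n → F)
    (hgood : ∀ i : Fin m, (i : ℕ) < min m n →
      v i ∉ Submodule.span F (v '' {j : Fin m | (j : ℕ) < (i : ℕ)}) ⊔
        (if (i : ℕ) + k < n then Sk else ⊥)) :
    Module.finrank F ↥(Submodule.span F (Set.range v) ⊓ Sk) = min m n + k - n := by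
  have hfr : Module.finrank F (Fin n → F) = n := by simp
  set S : ℕ → Submodule F (Fin n → F) :=
    fun i => Submodule.span F (v '' {j : Fin m | (j : ℕ) < i}) with hS
  have main : ∀ i, i ≤ m → Module.finrank F ↥(S i) = min i n ∧
      Module.finrank F ↥(S i ⊔ Sk) = min (i + k) n := by
    intro i
    induction i with
    | zero =>
      intro _
      have he : {j : Fin m | (j : ℕ) < 0} = (∅ : Set (Fin m)) := by
        ext j; simp
      have hb : S 0 = ⊥ := by simp [hS, he]
      constructor
      · rw [hb]; simp
      · rw [hb, bot_sup_eq, hSk]; omega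
    | succ i ih =>
      intro hi1
      have hi : i < m := hi1
      obtain ⟨ihA, ihB⟩ := ih (le_of_lt hi)
      set ii : Fin m := ⟨i, hi⟩ with hii
      have hstep : S (i + 1) = S i ⊔ Submodule.span F {v ii} := by
        have hset : {j : Fin m | (j : ℕ) < i + 1} =
            {j : Fin m | (j : ℕ) < i} ∪ {ii} := by
          ext j
          simp only [Set.mem_setOf_eq, Set.mem_union, Set.mem_singleton_iff, Nat.lt_succ_iff_lt_or_eq, hii, Fin.ext_iff]
        rw [hS]
        simp only [hset, Set.image_union, Set.image_singleton, Submodule.span_union]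
      by_cases hcase : i < min m n
      · have hg := hgood ii hcase
        by_cases hik : i + k < n
        · rw [if_pos hik] at hg
          have hvS : v ii ∉ S i := fun h => hg (Submodule.mem_sup_left h)
          have hvSk : v ii ∉ S i ⊔ Sk := hg
          have hin : i < n := by omega
          constructor
          · rw [hstep, aux_sup_span _ hvS, ihA]; omega
          · have : S (i+1) ⊔ Sk = (S i ⊔ Sk) ⊔ Submodule.span F {v ii} := by
              rw [hstep]; rw [sup_assoc, sup_comm (Submodule.span F {v ii}) Sk, ← sup_assoc]
            rw [this, aux_sup_span _ hvSk, ihB]; omega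
        · rw [if_neg hik] at hg
          have hvS : v ii ∉ S i := by rw [sup_bot_eq] at hg; exact hg
          have htop : S i ⊔ Sk = ⊤ := by
            apply Submodule.eq_top_of_finrank_eq
            rw [ihB, hfr]; omega
          constructor
          · rw [hstep, aux_sup_span _ hvS, ihA]; omega
          · have : S (i+1) ⊔ Sk = ⊤ := by
              rw [hstep, sup_assoc, sup_comm (Submodule.span F {v ii}) Sk, ← sup_assoc, htop]
              simp
            rw [this]
            rw [finrank_top, hfr]; omega
      · have hni : n ≤ i := by omega
        have htop : S i = ⊤ := by
          apply Submodule.eq_top_of_finrank_eq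
          rw [ihA, hfr]; omega
        have htop1 : S (i+1) = ⊤ := by
          rw [hstep, htop]; simp
        constructor
        · rw [htop1, finrank_top, hfr]; omega
        · rw [htop1, top_sup_eq, finrank_top, hfr]; omega
  obtain ⟨h1, h2⟩ := main m le_rfl
  have hrange : S m = Submodule.span F (Set.range v) := by
    have hu : {j : Fin m | (j : ℕ) < m} = Set.univ := by
      ext j; simpa using j.isLt
    show Submodule.span F (v '' {j : Fin m | (j : ℕ) < m}) = _
    rw [hu, Set.image_univ]
  have heq := Submodule.finrank_sup_add_finrank_inf_eq (S m) Sk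
  rw [h1, h2, hSk, hrange] at heq
  omega


lemma bad_count {m B : ℕ} {W : Type*} [Fintype W] (i : Fin m)
    (U : (Fin m → W) → Finset W)
    (hU : ∀ v w : Fin m → W, (∀ j, j ≠ i → v j = w j) → U v = U w)
    (hUc : ∀ v, (U v).card ≤ B) :
    (Finset.univ.filter (fun v : Fin m → W => v i ∈ U v)).card ≤
      Fintype.card ({j : Fin m // j ≠ i} → W) * B := by
  classical
  set f : (Fin m → W) → ({j : Fin m // j ≠ i} → W) := fun v j => v j with hf
  rw [Finset.card_eq_sum_card_fiberwise
    (f := f) (t := Finset.univ) (fun x _ => Finset.mem_univ _)]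
  have hbound : ∀ w ∈ (Finset.univ : Finset ({j : Fin m // j ≠ i} → W)),
      ((Finset.univ.filter (fun v : Fin m → W => v i ∈ U v)).filter
        (fun v => f v = w)).card ≤ B := by
    intro w _
    set s := (Finset.univ.filter (fun v : Fin m → W => v i ∈ U v)).filter
        (fun v => f v = w) with hs
    rcases s.eq_empty_or_nonempty with he | ⟨v0, hv0⟩
    · simp [he]
    · have hv0' : v0 i ∈ U v0 ∧ f v0 = w := by
        have := hv0
        rw [hs] at this
        simp only [Finset.mem_filter, Finset.mem_univ, true_and] at this
        exact this
      refine le_trans (Finset.card_le_card_of_injOn (fun v => v i)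
        (fun v hv => ?_) (fun v hv v' hv' hvv' => ?_)) (hUc v0)
      · rw [hs] at hv
        simp only [Finset.mem_coe, Finset.mem_filter, Finset.mem_univ, true_and] at hv
        have : U v = U v0 := by
          apply hU
          intro j hj
          have : v j = w ⟨j, hj⟩ := by rw [← hv.2]
          rw [this, ← hv0'.2]
        rw [← this]; exact hv.1
      · simp only [hs, Finset.coe_filter, Finset.mem_filter, Set.mem_setOf_eq,
          Finset.mem_univ, true_and] at hv hv'
        funext j
        by_cases hj : j = i
        · subst hj; exact hvv'
        · have h1 : v j = w ⟨j, hj⟩ := by rw [← hv.2]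
          have h2 : v' j = w ⟨j, hj⟩ := by rw [← hv'.2]
          rw [h1, h2]
  calc _ ≤ ∑ _w ∈ (Finset.univ : Finset ({j : Fin m // j ≠ i} → W)), B :=
        Finset.sum_le_sum hbound
    _ = Fintype.card ({j : Fin m // j ≠ i} → W) * B := by
        rw [Finset.sum_const, Finset.card_univ, smul_eq_mul]


lemma exp_aux {m n : ℕ} (hm : 1 ≤ m) (hn : 1 ≤ n) :
    n * (m - 1) + (n - 1) ≤ m * n - 1 := by
  have h1 : n * (m - 1) = n * m - n := by
    rw [Nat.mul_sub]
    simp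
  rw [h1, Nat.mul_comm n m]
  have h2 : n ≤ m * n := Nat.le_mul_of_pos_left n (by omega)
  omega

/-- Lemma 3: for fixed `n, k, m` there is a constant `C` such that for every
prime power `q`, every finite field `F` with `|F| = q` and every `k`-dimensional subspace
`Πk` of `F^n`, the span `Π` of `m` uniformly random vectors of `F^n` satisfies
`dim (Π ∩ Πk) = (min(m,n) + k − n)^+` with probability at least `1 − C/q`. -/
theorem stmt_3 (n k m : ℕ) (hn : 1 ≤ n) (hk : k ≤ n) (hm : 1 ≤ m) :
    ∃ C : ℝ, ∀ (q : ℕ), IsPrimePow q →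
      ∀ (F : Type) [Field F] [Fintype F], Fintype.card F = q →
      ∀ (Sk : Submodule F (Fin n → F)), Module.finrank F ↥Sk = k →
      1 - C / q ≤
        ((Finset.univ.filter (fun v : Fin m → (Fin n → F) =>
            Module.finrank F ↥(Submodule.span F (Set.range v) ⊓ Sk)
              = min m n + k - n)).card : ℝ) / (q : ℝ) ^ (m * n) := by
  refine ⟨m, ?_⟩
  intro q hq F _ _ hcF Sk hSk
  classical
  have hq2 : 2 ≤ q := hq.two_le
  have hq1 : 1 ≤ q := by omega
  set W := (Fin n → F) with hW
  set D : Fin m → (Fin m → W) → Submodule F W := fun i v =>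
    Submodule.span F (v '' {j : Fin m | (j : ℕ) < (i : ℕ)}) ⊔
      (if (i : ℕ) + k < n then Sk else ⊥) with hD
  set P : (Fin m → W) → Prop := fun v => ∀ i : Fin m, (i : ℕ) < min m n → v i ∉ D i v with hP
  -- total count
  have hcW : Fintype.card W = q ^ n := by
    show Fintype.card (Fin n → F) = q ^ n
    rw [Fintype.card_fun, hcF, Fintype.card_fin]
  have htotal : Fintype.card (Fin m → W) = q ^ (m * n) := by
    rw [Fintype.card_fun, hcW, Fintype.card_fin, ← pow_mul, mul_comm n m]
  -- per-index bad count
  have hbad : ∀ i : Fin m,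
      (Finset.univ.filter (fun v : Fin m → W =>
        (i : ℕ) < min m n ∧ v i ∈ D i v)).card ≤ q ^ (m * n - 1) := by
    intro i
    by_cases hi : (i : ℕ) < min m n
    · have hfe : (Finset.univ.filter (fun v : Fin m → W =>
          (i : ℕ) < min m n ∧ v i ∈ D i v)) =
          (Finset.univ.filter (fun v : Fin m → W => v i ∈ D i v)) := by
        apply Finset.filter_congr
        intro v _
        simp [hi]
      rw [hfe]
      have hcount := bad_count (B := q ^ (n - 1)) i
        (fun v => ((D i v : Set W)).toFinset) ?_ ?_
      · refine le_trans ?_ (le_trans hcount ?_)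
        · apply Finset.card_le_card
          intro v hv
          simp only [Finset.mem_filter, Finset.mem_univ, true_and,
            Set.mem_toFinset, SetLike.mem_coe] at hv ⊢
          exact hv
        · have hcs : Fintype.card {j : Fin m // j ≠ i} = m - 1 := by
            simp [Fintype.card_subtype_compl]
          have hcf : Fintype.card ({j : Fin m // j ≠ i} → W) = (q ^ n) ^ (m - 1) := by
            rw [Fintype.card_fun, hcW, hcs]
          rw [hcf, ← pow_mul, ← pow_add]
          exact Nat.pow_le_pow_right hq1 (exp_aux hm hn)
      · -- hU : depends only on coordinates ≠ i
        intro v w hvw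
        have himg : v '' {j : Fin m | (j : ℕ) < (i : ℕ)} =
            w '' {j : Fin m | (j : ℕ) < (i : ℕ)} := by
          apply Set.image_congr
          intro j hj
          apply hvw
          intro hji
          rw [hji] at hj
          simp only [Set.mem_setOf_eq] at hj
          exact absurd hj (lt_irrefl _)
        have hDe : D i v = D i w := by
          show Submodule.span F (v '' {j : Fin m | (j : ℕ) < (i : ℕ)}) ⊔
              (if (i : ℕ) + k < n then Sk else ⊥) = _
          rw [himg]
        show (((D i v : Set W)).toFinset) = (((D i w : Set W)).toFinset)
        rw [hDe]
      · -- hUc : cardinal bound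
        intro v
        have hfin : Module.finrank F ↥(D i v) ≤ n - 1 := by
          have hA : Module.finrank F
              ↥(Submodule.span F (v '' {j : Fin m | (j : ℕ) < (i : ℕ)})) ≤ (i : ℕ) := by
            have hset : v '' {j : Fin m | (j : ℕ) < (i : ℕ)} =
                ↑((Finset.univ.filter (fun j : Fin m => (j : ℕ) < (i : ℕ))).image v) := by
              ext x; simp
            rw [hset]
            refine le_trans (finrank_span_finset_le_card _) ?_
            refine le_trans Finset.card_image_le ?_
            have : ((Finset.univ.filter (fun j : Fin m => (j : ℕ) < (i : ℕ)))).card ≤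
                (Finset.range (i : ℕ)).card := by
              refine Finset.card_le_card_of_injOn (fun j => (j : ℕ)) ?_ ?_
              · intro j hj
                simp only [Finset.mem_coe, Finset.mem_filter] at hj
                simp [hj.2]
              · intro a _ b _ hab
                exact Fin.ext hab
            simpa using this
          by_cases hik : (i : ℕ) + k < n
          · have heq := Submodule.finrank_sup_add_finrank_inf_eq
              (Submodule.span F (v '' {j : Fin m | (j : ℕ) < (i : ℕ)})) Sk
            rw [hSk] at heq
            have : D i v = Submodule.span F
                  (v '' {j : Fin m | (j : ℕ) < (i : ℕ)}) ⊔ Sk := by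
              show Submodule.span F (v '' {j : Fin m | (j : ℕ) < (i : ℕ)}) ⊔
                  (if (i : ℕ) + k < n then Sk else ⊥) = _
              rw [if_pos hik]
            rw [this]
            omega
          · have : D i v = Submodule.span F (v '' {j : Fin m | (j : ℕ) < (i : ℕ)}) := by
              show Submodule.span F (v '' {j : Fin m | (j : ℕ) < (i : ℕ)}) ⊔
                  (if (i : ℕ) + k < n then Sk else ⊥) = _
              rw [if_neg hik, sup_bot_eq]
            rw [this]
            omega
        have hcd : (((D i v : Set W)).toFinset).card = q ^ Module.finrank F ↥(D i v) := by
          rw [Set.toFinset_card, ← hcF]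
          exact Module.card_eq_pow_finrank
        rw [hcd]
        exact Nat.pow_le_pow_right hq1 hfin
    · have : (Finset.univ.filter (fun v : Fin m → W =>
          (i : ℕ) < min m n ∧ v i ∈ D i v)) = ∅ := by
        apply Finset.filter_false_of_mem
        intro v _
        exact fun h => hi h.1
      rw [this]
      simp
  -- total bad count
  have hbadall : (Finset.univ.filter (fun v : Fin m → W => ¬ P v)).card ≤
      m * q ^ (m * n - 1) := by
    have hsub : (Finset.univ.filter (fun v : Fin m → W => ¬ P v)) ⊆
        Finset.univ.biUnion (fun i : Fin m =>
          Finset.univ.filter (fun v : Fin m → W =>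
            (i : ℕ) < min m n ∧ v i ∈ D i v)) := by
      intro v hv
      simp only [Finset.mem_filter, Finset.mem_univ, true_and, hP] at hv
      push_neg at hv
      obtain ⟨i, hi1, hi2⟩ := hv
      rw [Finset.mem_biUnion]
      exact ⟨i, Finset.mem_univ _, by simp [hi1, hi2]⟩
    refine le_trans (Finset.card_le_card hsub) ?_
    refine le_trans (Finset.card_biUnion_le) ?_
    refine le_trans (Finset.sum_le_sum (fun i _ => hbad i)) ?_
    simp [Finset.sum_const, Finset.card_univ]
  -- good count
  have hgoodcard : q ^ (m * n) ≤
      (Finset.univ.filter P).card + m * q ^ (m * n - 1) := by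
    have := Finset.card_filter_add_card_filter_not
      (s := (Finset.univ : Finset (Fin m → W))) (p := P)
    rw [Finset.card_univ, htotal] at this
    omega
  -- good implies target
  have hsubT : (Finset.univ.filter P) ⊆
      (Finset.univ.filter (fun v : Fin m → W =>
        Module.finrank F ↥(Submodule.span F (Set.range v) ⊓ Sk) = min m n + k - n)) := by
    intro v hv
    simp only [Finset.mem_filter, Finset.mem_univ, true_and, hP] at hv ⊢
    exact key_lemma hk Sk hSk v hv
  have hTcard : (Finset.univ.filter P).card ≤
      (Finset.univ.filter (fun v : Fin m → W =>
        Module.finrank F ↥(Submodule.span F (Set.range v) ⊓ Sk) = min m n + k - n)).card :=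
    Finset.card_le_card hsubT
  -- real arithmetic
  set T := (Finset.univ.filter (fun v : Fin m → W =>
    Module.finrank F ↥(Submodule.span F (Set.range v) ⊓ Sk) = min m n + k - n)).card with hT
  have hqR : (0 : ℝ) < (q : ℝ) := by exact_mod_cast (by omega : 0 < q)
  have hqpow : (0 : ℝ) < (q : ℝ) ^ (m * n) := by positivity
  have hcast : ((q : ℝ)) ^ (m * n) ≤ (T : ℝ) + m * (q : ℝ) ^ (m * n - 1) := by
    have hnat : q ^ (m * n) ≤ T + m * q ^ (m * n - 1) := le_trans hgoodcard (by omega)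
    exact_mod_cast hnat
  have h1mn : 1 ≤ m * n := le_trans hm (Nat.le_mul_of_pos_right m (by omega))
  have hqe : (q : ℝ) ^ (m * n) = (q : ℝ) ^ (m * n - 1) * q := by
    rw [← pow_succ]
    congr 1
    omega
  have hkey : 1 - (m : ℝ) / q =
      ((q : ℝ) ^ (m * n) - m * (q : ℝ) ^ (m * n - 1)) / (q : ℝ) ^ (m * n) := by
    rw [sub_div, div_self (ne_of_gt hqpow)]
    congr 1
    rw [div_eq_div_iff (ne_of_gt hqR) (ne_of_gt hqpow), hqe]
    ring
  rw [hkey]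
  have hnum : ((q : ℝ) ^ (m * n) - m * (q : ℝ) ^ (m * n - 1)) ≤ (T : ℝ) := by linarith
  gcongr
end

section
/- (Theorem 1: random subspaces are in general position.) Fix integers n ≥ 1, m ≥ 1, r ≥ 1 and dimensions d_1, …, d_r with 0 ≤ d_i ≤ n. There exists a constant C, depending only on these fixed parameters, such that for every prime power q and every family Π_1, …, Π_r of subspaces of F_q^n with dim(Π_i) = d_i, the following holds: if Π is the span of m vectors chosen independently and uniformly at random from F_q^n, then with probability at least 1 − C/q one has dim(Π) = min(m,n) and, for every i ∈ {1,…,r}, dim(Π_i ∩ Π) = max(d_i + min(m,n) − n, 0); i.e., Π is in general position with respect to the family {Π_i}. -/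
open scoped Classical

section aux

variable {F : Type} [Field F] {n m : ℕ}

/-- span of the first `j` of the vectors -/
def pspan (v : Fin m → (Fin n → F)) (j : ℕ) : Submodule F (Fin n → F) :=
  Submodule.span F (v '' {k | (k : ℕ) < j})

lemma pspan_zero (v : Fin m → (Fin n → F)) : pspan v 0 = ⊥ := by
  have : {k : Fin m | (k : ℕ) < 0} = ∅ := by ext k; simp
  simp [pspan, this]

lemma pspan_succ (v : Fin m → (Fin n → F)) (j : ℕ) (hj : j < m) :
    pspan v (j+1) = pspan v j ⊔ Submodule.span F {v ⟨j, hj⟩} := by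
  have hset : {k : Fin m | (k : ℕ) < j + 1} = {k : Fin m | (k : ℕ) < j} ∪ {⟨j, hj⟩} := by
    ext k
    simp only [Set.mem_setOf_eq, Set.mem_union, Set.mem_singleton_iff]
    constructor
    · intro h
      rcases Nat.lt_succ_iff_lt_or_eq.mp h with h | h
      · exact Or.inl h
      · exact Or.inr (Fin.ext h)
    · rintro (h | rfl)
      · omega
      · simp
  rw [pspan, pspan, hset, Set.image_union, Submodule.span_union, Set.image_singleton]

lemma pspan_last (v : Fin m → (Fin n → F)) : pspan v m = Submodule.span F (Set.range v) := by
  have : {k : Fin m | (k : ℕ) < m} = Set.univ := by ext k; simp [k.isLt]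
  rw [pspan, this, Set.image_univ]

lemma pspan_congr (v w : Fin m → (Fin n → F)) (j : ℕ)
    (h : ∀ k : Fin m, (k : ℕ) < j → v k = w k) : pspan v j = pspan w j := by
  unfold pspan
  congr 1
  ext x
  simp only [Set.mem_image, Set.mem_setOf_eq]
  constructor
  · rintro ⟨k, hk, rfl⟩; exact ⟨k, hk, (h k hk).symm⟩
  · rintro ⟨k, hk, rfl⟩; exact ⟨k, hk, h k hk⟩

lemma rank_step (W : Submodule F (Fin n → F)) (x : Fin n → F) (hx : x ∉ W) :
    Module.finrank F ↥(W ⊔ Submodule.span F {x}) = Module.finrank F ↥W + 1 := by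
  have hx0 : x ≠ 0 := fun h => hx (h ▸ W.zero_mem)
  have h1 : Module.finrank F ↥(Submodule.span F ({x} : Set (Fin n → F))) = 1 :=
    finrank_span_singleton hx0
  have hinf : W ⊓ Submodule.span F ({x} : Set (Fin n → F)) = ⊥ := by
    rw [eq_bot_iff]
    rintro y hy
    rw [Submodule.mem_inf] at hy
    obtain ⟨hyW, hyx⟩ := hy
    rw [Submodule.mem_span_singleton] at hyx
    obtain ⟨c, rfl⟩ := hyx
    rcases eq_or_ne c 0 with rfl | hc
    · simp
    · exact absurd (by simpa [smul_smul, inv_mul_cancel₀ hc] using W.smul_mem c⁻¹ hyW) hx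
  have key := Submodule.finrank_sup_add_finrank_inf_eq W (Submodule.span F ({x} : Set (Fin n → F)))
  rw [hinf, h1, finrank_bot] at key
  omega

lemma det_lemma (v : Fin m → (Fin n → F)) (T : Submodule F (Fin n → F))
    (hgood : ∀ j : Fin m, T ⊔ pspan v (j : ℕ) = ⊤ ∨ v j ∉ T ⊔ pspan v (j : ℕ)) :
    ∀ j ≤ m, Module.finrank F ↥(T ⊔ pspan v j) = min (Module.finrank F ↥T + j) n := by
  have hfr : Module.finrank F (Fin n → F) = n := by
    rw [Module.finrank_pi]; simp
  intro j
  induction j with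
  | zero =>
    intro _
    rw [pspan_zero, sup_bot_eq]
    have := Submodule.finrank_le T
    rw [hfr] at this
    omega
  | succ j ih =>
    intro hj1
    have hj : j < m := hj1
    have ihj := ih (le_of_lt hj)
    rw [pspan_succ v j hj, ← sup_assoc]
    rcases hgood ⟨j, hj⟩ with htop | hnotmem
    · have htop' : T ⊔ pspan v j = ⊤ := htop
      rw [htop', top_sup_eq]
      have h2 : Module.finrank F ↥(⊤ : Submodule F (Fin n → F)) = n := by
        rw [finrank_top, hfr]
      rw [htop', h2] at ihj
      omega
    · have hW : v ⟨j, hj⟩ ∉ T ⊔ pspan v j := hnotmem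
      rw [rank_step _ _ hW, ihj]
      have hlt : Module.finrank F ↥(T ⊔ pspan v j) < n := by
        have : T ⊔ pspan v j < ⊤ := lt_top_iff_ne_top.mpr (fun h => hW (h ▸ Submodule.mem_top))
        have := Submodule.finrank_lt (ne_of_lt this)
        rwa [hfr] at this
      rw [ihj] at hlt
      omega

end aux

section count

variable {F : Type} [Field F] [Fintype F] {n m : ℕ}

lemma count_lemma (hn : 1 ≤ n) (j : Fin m) (T : Submodule F (Fin n → F)) :
    (Finset.univ.filter (fun v : Fin m → (Fin n → F) =>
        T ⊔ pspan v (j : ℕ) ≠ ⊤ ∧ v j ∈ T ⊔ pspan v (j : ℕ))).card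
      ≤ Fintype.card F ^ (n * m - 1) := by
  classical
  set q := Fintype.card F with hq
  set B := (Finset.univ.filter (fun v : Fin m → (Fin n → F) =>
        T ⊔ pspan v (j : ℕ) ≠ ⊤ ∧ v j ∈ T ⊔ pspan v (j : ℕ))) with hB
  set s := Fintype.piFinset (fun k : Fin m =>
    if k = j then ({0} : Finset (Fin n → F)) else Finset.univ) with hs
  have hmaps : ∀ v ∈ B, Function.update v j 0 ∈ s := by
    intro v _
    rw [hs, Fintype.mem_piFinset]
    intro k
    by_cases hk : k = j
    · subst hk; simp
    · simp [hk, Function.update_of_ne hk]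
  have hfiber : ∀ w ∈ s,
      (B.filter (fun v => Function.update v j 0 = w)).card ≤ q ^ (n - 1) := by
    intro w _
    rcases Finset.eq_empty_or_nonempty (B.filter (fun v => Function.update v j 0 = w)) with he | ⟨v0, hv0⟩
    · rw [he]; simp
    · rw [Finset.mem_filter] at hv0
      obtain ⟨hv0B, hv0w⟩ := hv0
      rw [hB, Finset.mem_filter] at hv0B
      obtain ⟨-, hv0top, -⟩ := hv0B
      -- pspan only depends on coordinates < j, which are untouched by the update
      have hpc : ∀ v : Fin m → (Fin n → F), Function.update v j 0 = w →
          pspan v (j : ℕ) = pspan w (j : ℕ) := by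
        intro v hv
        apply pspan_congr
        intro k hk
        have hkj : k ≠ j := fun h => by rw [h] at hk; omega
        rw [← hv, Function.update_of_ne hkj]
      have hWtop : T ⊔ pspan w (j : ℕ) ≠ ⊤ := by
        rw [← hpc v0 hv0w]; exact hv0top
      set W := T ⊔ pspan w (j : ℕ) with hW
      have hWfr : Module.finrank F ↥W < n := by
        have hfr : Module.finrank F (Fin n → F) = n := by rw [Module.finrank_pi]; simp
        have := Submodule.finrank_lt (K := F) hWtop
        rwa [hfr] at this
      have hcardW : (Finset.univ.filter (fun x => x ∈ W)).card ≤ q ^ (n - 1) := by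
        have h1 : (Finset.univ.filter (fun x => x ∈ W)).card = Fintype.card ↥W :=
          (Fintype.card_subtype _).symm
        have h2 : Fintype.card ↥W = q ^ Module.finrank F ↥W := Module.card_eq_pow_finrank
        rw [h1, h2]
        exact Nat.pow_le_pow_right Fintype.card_pos (by omega)
      refine le_trans (Finset.card_le_card_of_injOn (fun v => v j) ?_ ?_) hcardW
      · intro v hv
        rw [Finset.mem_coe, Finset.mem_filter] at hv
        obtain ⟨hvB, hvw⟩ := hv
        rw [hB, Finset.mem_filter] at hvB
        obtain ⟨-, -, hvmem⟩ := hvB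
        rw [Finset.mem_coe, Finset.mem_filter]
        refine ⟨Finset.mem_univ _, ?_⟩
        rw [hW, ← hpc v hvw]
        exact hvmem
      · intro v hv v' hv' hvv'
        simp only [Finset.coe_filter, Set.mem_setOf_eq] at hv hv'
        funext k
        by_cases hk : k = j
        · subst hk; exact hvv'
        · have := congrFun (hv.2.trans hv'.2.symm) k
          rwa [Function.update_of_ne hk, Function.update_of_ne hk] at this
  calc B.card = ∑ w ∈ s, (B.filter (fun v => Function.update v j 0 = w)).card := by
        rw [← Finset.card_eq_sum_card_fiberwise hmaps]
    _ ≤ ∑ _w ∈ s, q ^ (n - 1) := Finset.sum_le_sum hfiber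
    _ = s.card * q ^ (n - 1) := by rw [Finset.sum_const, smul_eq_mul]
    _ = q ^ (n * (m - 1)) * q ^ (n - 1) := by
        congr 1
        rw [hs, Fintype.card_piFinset]
        have hfac : ∀ k : Fin m, (if k = j then ({0} : Finset (Fin n → F)) else Finset.univ).card
            = if k = j then 1 else q ^ n := by
          intro k
          split_ifs
          · simp
          · rw [Finset.card_univ, Fintype.card_fun, Fintype.card_fin]
        rw [Finset.prod_congr rfl (fun k _ => hfac k)]
        rw [← Finset.mul_prod_erase Finset.univ _ (Finset.mem_univ j)]
        simp only [if_pos rfl, one_mul]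
        have : ∀ k ∈ Finset.univ.erase j, (if k = j then 1 else q ^ n) = q ^ n := by
          intro k hk
          rw [if_neg (Finset.mem_erase.mp hk).1]
        rw [Finset.prod_congr rfl this, Finset.prod_const, Finset.card_erase_of_mem (Finset.mem_univ j),
          Finset.card_univ, Fintype.card_fin, ← pow_mul]
        simp
    _ = q ^ (n * m - 1) := by
        rw [← pow_add]
        congr 1
        have hm : 0 < m := j.pos
        obtain ⟨m', rfl⟩ : ∃ m', m = m' + 1 := ⟨m - 1, by omega⟩
        simp only [Nat.add_sub_cancel]
        rw [Nat.mul_succ, Nat.add_sub_assoc hn]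

end count


/-- Theorem 1: random subspaces are in general position: for fixed
`n, m, r` and dimensions `d₁, …, d_r ≤ n` there is a constant `C` such that for every
prime power `q` and every family `S₁, …, S_r` of subspaces of `F_q^n` with
`dim Sᵢ = dᵢ`, the span `S` of `m` uniformly random vectors of `F_q^n` satisfies, with
probability at least `1 − C/q`: `dim S = min(m,n)` and
`dim (Sᵢ ∩ S) = max(dᵢ + min(m,n) − n, 0)` for every `i`. -/
theorem stmt_6 (n m r : ℕ) (hn : 1 ≤ n) (hm : 1 ≤ m) (hr : 1 ≤ r)
    (d : Fin r → ℕ) (hd : ∀ i, d i ≤ n) :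
    ∃ C : ℝ, ∀ (q : ℕ), IsPrimePow q →
      ∀ (F : Type) [Field F] [Fintype F], Fintype.card F = q →
      ∀ (S : Fin r → Submodule F (Fin n → F)),
        (∀ i, Module.finrank F ↥(S i) = d i) →
      1 - C / q ≤
        ((Finset.univ.filter (fun v : Fin m → (Fin n → F) =>
            Module.finrank F ↥(Submodule.span F (Set.range v)) = min m n ∧
            ∀ i : Fin r,
              Module.finrank F ↥(S i ⊓ Submodule.span F (Set.range v))
                = d i + min m n - n)).card : ℝ)
          / (q : ℝ) ^ (m * n) := by
  classical
  refine ⟨((r + 1) * m : ℕ), ?_⟩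
  intro q hq F _ _ hcard S hS
  have hq2 : 2 ≤ q := hq.two_le
  set T : Option (Fin r) → Submodule F (Fin n → F) := fun o => o.elim ⊥ S with hT
  set Good : (Fin m → (Fin n → F)) → Prop := fun v =>
    ∀ (o : Option (Fin r)) (j : Fin m),
      T o ⊔ pspan v (j : ℕ) = ⊤ ∨ v j ∉ T o ⊔ pspan v (j : ℕ) with hGood
  set target := (Finset.univ.filter (fun v : Fin m → (Fin n → F) =>
            Module.finrank F ↥(Submodule.span F (Set.range v)) = min m n ∧
            ∀ i : Fin r,
              Module.finrank F ↥(S i ⊓ Submodule.span F (Set.range v))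
                = d i + min m n - n)) with htarget
  -- Good implies the target predicate
  have hGoodTarget : ∀ v, Good v →
      (Module.finrank F ↥(Submodule.span F (Set.range v)) = min m n ∧
       ∀ i : Fin r, Module.finrank F ↥(S i ⊓ Submodule.span F (Set.range v))
          = d i + min m n - n) := by
    intro v hv
    have hrank : Module.finrank F ↥(Submodule.span F (Set.range v)) = min m n := by
      have h := det_lemma v ⊥ (hv none) m le_rfl
      rwa [pspan_last, bot_sup_eq, finrank_bot, zero_add] at h
    refine ⟨hrank, fun i => ?_⟩
    have hsup := det_lemma v (S i) (hv (some i)) m le_rfl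
    rw [pspan_last, hS i] at hsup
    have key := Submodule.finrank_sup_add_finrank_inf_eq (S i) (Submodule.span F (Set.range v))
    rw [hsup, hrank, hS i] at key
    have hdn := hd i
    rcases le_or_gt n (d i + m) with h | h
    · rw [min_eq_right h] at key
      omega
    · have hmn : m < n := by omega
      rw [min_eq_left (le_of_lt h)] at key
      rw [min_eq_left (le_of_lt hmn)] at key ⊢
      omega
  have hsub : Finset.univ.filter Good ⊆ target := by
    intro v hv
    rw [Finset.mem_filter] at hv
    rw [htarget, Finset.mem_filter]
    exact ⟨Finset.mem_univ _, hGoodTarget v hv.2⟩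
  -- union bound on the bad set
  have hbad : (Finset.univ.filter (fun v => ¬ Good v)).card
      ≤ (r + 1) * m * q ^ (n * m - 1) := by
    have hsubB : Finset.univ.filter (fun v => ¬ Good v) ⊆
        Finset.univ.biUnion (fun p : Option (Fin r) × Fin m =>
          Finset.univ.filter (fun v : Fin m → (Fin n → F) =>
            T p.1 ⊔ pspan v ((p.2 : Fin m) : ℕ) ≠ ⊤ ∧
              v p.2 ∈ T p.1 ⊔ pspan v ((p.2 : Fin m) : ℕ))) := by
      intro v hv
      rw [Finset.mem_filter] at hv
      obtain ⟨-, hv⟩ := hv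
      simp only [hGood, not_forall, not_or, not_not] at hv
      obtain ⟨o, j, h1, h2⟩ := hv
      refine Finset.mem_biUnion.mpr ⟨(o, j), Finset.mem_univ _, ?_⟩
      rw [Finset.mem_filter]
      exact ⟨Finset.mem_univ _, h1, h2⟩
    refine le_trans (Finset.card_le_card hsubB) ?_
    refine le_trans Finset.card_biUnion_le ?_
    have hb : ∀ p : Option (Fin r) × Fin m,
        (Finset.univ.filter (fun v : Fin m → (Fin n → F) =>
            T p.1 ⊔ pspan v ((p.2 : Fin m) : ℕ) ≠ ⊤ ∧
              v p.2 ∈ T p.1 ⊔ pspan v ((p.2 : Fin m) : ℕ))).card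
          ≤ q ^ (n * m - 1) := by
      intro p
      have := count_lemma hn p.2 (T p.1)
      rwa [hcard] at this
    refine le_trans (Finset.sum_le_sum (fun p _ => hb p)) ?_
    rw [Finset.sum_const, smul_eq_mul, Finset.card_univ, Fintype.card_prod,
      Fintype.card_option, Fintype.card_fin]
    simp
  -- total count
  have htotal : Fintype.card (Fin m → (Fin n → F)) = q ^ (m * n) := by
    rw [Fintype.card_fun, Fintype.card_fun, Fintype.card_fin, Fintype.card_fin, hcard,
      ← pow_mul, mul_comm n m]
  have hcnt : q ^ (m * n) ≤ target.card + (r + 1) * m * q ^ (m * n - 1) := by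
    have h1 := Finset.card_filter_add_card_filter_not (s := (Finset.univ :
      Finset (Fin m → (Fin n → F)))) Good
    rw [Finset.card_univ, htotal] at h1
    have h2 : (Finset.univ.filter Good).card ≤ target.card := Finset.card_le_card hsub
    rw [mul_comm n m] at hbad
    omega
  -- numeric conclusion
  have hq0 : (0 : ℝ) < (q : ℝ) := by exact_mod_cast Nat.lt_of_lt_of_le Nat.zero_lt_two hq2
  have hmn1 : 1 ≤ m * n := Nat.mul_pos hm hn
  have hpow0 : (0 : ℝ) < (q : ℝ) ^ (m * n) := by positivity
  have hpows : (q : ℝ) ^ (m * n) = (q : ℝ) ^ (m * n - 1) * q := by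
    rw [← pow_succ]
    congr 1
    omega
  have hkey : ((q : ℝ)) ^ (m * n)
      ≤ (target.card : ℝ) + (((r + 1) * m : ℕ) : ℝ) * (q : ℝ) ^ (m * n - 1) := by
    exact_mod_cast hcnt
  have heq : 1 - (((r + 1) * m : ℕ) : ℝ) / q
      = ((q : ℝ) ^ (m * n) - (((r + 1) * m : ℕ) : ℝ) * (q : ℝ) ^ (m * n - 1))
        / (q : ℝ) ^ (m * n) := by
    rw [hpows]
    field_simp
  rw [heq]
  exact div_le_div_of_nonneg_right (by linarith) hpow0.le |>.trans le_rfl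
end

section
/- (Lemma 5: consecutive subspace sampling.) Fix t ≥ 1, n ≥ 1, dimensions d_0 < d_1 < ⋯ < d_{t−1} ≤ n, and integers k_u(1), …, k_u(t) and k_v(1), …, k_v(t) satisfying 1 ≤ k_u(1) < d_0, 1 ≤ k_v(1) < d_0, and k_u(j) ≤ d_{j−1} − d_{j−2}, k_v(j) ≤ d_{j−1} − d_{j−2} for j = 2, …, t. There exists a constant C, depending only on these fixed parameters, such that for every prime power q and every chain of subspaces Π(0) ⊂ Π(1) ⊂ ⋯ ⊂ Π(t−1) of F_q^n with dim(Π(j)) = d_j, the following holds. For j = 1, …, t let π_u(j) be the span of k_u(j) vectors chosen independently and uniformly at random from Π(j−1) and let π_v(j) be the span of k_v(j) vectors chosen independently and uniformly at random from Π(j−1) (all samples mutually independent), and set Π_u(i) = π_u(1) + ⋯ + π_u(i) and Π_v(i) = π_v(1) + ⋯ + π_v(i). Then with probability at least 1 − C/q: Π_u(i) ⊄ Π_v(j) and Π_v(j) ⊄ Π_u(i) for all i, j ∈ {1, …, t}. -/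
open scoped Classical

open Module
set_option linter.unusedSectionVars false
set_option maxHeartbeats 2000000


-- counting in a subspace
lemma aux_card_subspace {F : Type} [Field F] [Fintype F] (V : Type) [AddCommGroup V]
    [Module F V] [Fintype V] (W : Submodule F V) (hW : W ≠ ⊤) :
    Fintype.card F * (Finset.univ.filter (fun x : V => x ∈ W)).card ≤ Fintype.card V := by
  classical
  have : FiniteDimensional F V := Module.Finite.of_finite
  have h1 : (Finset.univ.filter (fun x : V => x ∈ W)).card = Fintype.card W := by
    rw [Fintype.card_subtype]
  have h2 : Fintype.card W = Fintype.card F ^ Module.finrank F W := card_eq_pow_finrank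
  have h3 : Fintype.card V = Fintype.card F ^ Module.finrank F V := card_eq_pow_finrank
  have h4 : Module.finrank F W < Module.finrank F V := by
    apply Submodule.finrank_lt_finrank_of_lt (lt_top_iff_ne_top.mpr hW) |>.trans_eq
    exact finrank_top F V
  have hq : 1 ≤ Fintype.card F := Fintype.card_pos
  calc Fintype.card F * (Finset.univ.filter (fun x : V => x ∈ W)).card
      = Fintype.card F ^ (Module.finrank F W + 1) := by rw [h1, h2]; ring
    _ ≤ Fintype.card F ^ Module.finrank F V := Nat.pow_le_pow_right hq (by omega)
    _ = Fintype.card V := h3.symm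


lemma aux_count_upd {Ω σ : Type} [Fintype Ω] [Fintype σ] [Nonempty σ]
    (upd : Ω → σ → Ω) (pr : Ω → σ)
    (h1 : ∀ ω x, pr (upd ω x) = x)
    (h2 : ∀ ω, upd ω (pr ω) = ω)
    (h3 : ∀ ω x y, upd (upd ω x) y = upd ω y)
    (Bad : Ω → Prop) [DecidablePred Bad] (q : ℕ)
    (hfib : ∀ ω : Ω, q * (Finset.univ.filter (fun x : σ => Bad (upd ω x))).card ≤ Fintype.card σ) :
    q * (Finset.univ.filter Bad).card ≤ Fintype.card Ω := by
  classical
  obtain ⟨x₀⟩ := ‹Nonempty σ›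
  set R := {r : Ω // upd r x₀ = r} with hR
  let e : Ω ≃ σ × R :=
  { toFun := fun ω => (pr ω, ⟨upd ω x₀, by rw [h3]⟩)
    invFun := fun z => upd z.2.1 z.1
    left_inv := fun ω => by simp only [h3, h2]
    right_inv := fun z => by
      obtain ⟨x, r, hr⟩ := z
      simp only [Prod.mk.injEq, h1, h3]
      exact ⟨trivial, Subtype.ext hr⟩ }
  have hc1 : (Finset.univ.filter Bad).card
      = (Finset.univ.filter (fun z : σ × R => Bad (e.symm z))).card := by
    rw [← Fintype.card_subtype, ← Fintype.card_subtype]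
    apply Fintype.card_congr
    exact e.subtypeEquiv (fun ω => by rw [Equiv.symm_apply_apply])
  have hc2 : (Finset.univ.filter (fun z : σ × R => Bad (e.symm z))).card
      = ∑ r : R, (Finset.univ.filter (fun x : σ => Bad (upd r.1 x))).card := by
    simp only [Finset.card_filter]
    rw [Fintype.sum_prod_type]
    exact Finset.sum_comm
  rw [hc1, hc2, Finset.mul_sum]
  calc ∑ r : R, q * (Finset.univ.filter (fun x : σ => Bad (upd r.1 x))).card
      ≤ ∑ _r : R, Fintype.card σ := Finset.sum_le_sum (fun r _ => hfib r.1)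
    _ = Fintype.card R * Fintype.card σ := by rw [Finset.sum_const, Finset.card_univ, smul_eq_mul]
    _ = Fintype.card Ω := by rw [Fintype.card_congr e, Fintype.card_prod]; ring


variable {F V : Type} [Field F] [AddCommGroup V] [Module F V]

/-- span of the first `m` vectors of a family indexed by `Fin k`. -/
noncomputable def Spart (F : Type) [Field F] {V : Type} [AddCommGroup V] [Module F V]
    {k : ℕ} (y : Fin k → V) (m : ℕ) : Submodule F V :=
  Submodule.span F (y '' {b : Fin k | (b : ℕ) < m})

lemma Spart_zero {k : ℕ} (y : Fin k → V) : Spart F y 0 = ⊥ := by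
  have : {b : Fin k | (b : ℕ) < 0} = ∅ := by ext b; simp
  simp [Spart, this]

lemma Spart_succ {k : ℕ} (y : Fin k → V) (m : ℕ) (hm : m < k) :
    Spart F y (m + 1) = Submodule.span F {y ⟨m, hm⟩} ⊔ Spart F y m := by
  have : {b : Fin k | (b : ℕ) < m + 1} = insert ⟨m, hm⟩ {b : Fin k | (b : ℕ) < m} := by
    ext b; simp [Fin.ext_iff]; omega
  rw [Spart, this, Set.image_insert_eq, Submodule.span_insert]; rfl

lemma Spart_succ' {k : ℕ} (y : Fin k → V) (m : ℕ) (hm : ¬ m < k) :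
    Spart F y (m + 1) = Spart F y m := by
  have : {b : Fin k | (b : ℕ) < m + 1} = {b : Fin k | (b : ℕ) < m} := by
    ext b; have := b.isLt; simp; omega
  rw [Spart, this]; rfl

lemma Spart_full {k : ℕ} (y : Fin k → V) : Spart F y k = Submodule.span F (Set.range y) := by
  have : {b : Fin k | (b : ℕ) < k} = Set.univ := by ext b; simp [b.isLt]
  rw [Spart, this, Set.image_univ]

lemma Spart_finrank [FiniteDimensional F V] {k : ℕ} (y : Fin k → V) (m : ℕ) :
    finrank F (Spart F y m) ≤ m := by
  induction m with
  | zero => simp [Spart_zero]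
  | succ m ih =>
    by_cases hm : m < k
    · rw [Spart_succ y m hm]
      calc finrank F ↥(Submodule.span F {y ⟨m, hm⟩} ⊔ Spart F y m)
          ≤ finrank F (Submodule.span F {y ⟨m, hm⟩}) + finrank F (Spart F y m) :=
            Submodule.finrank_add_le_finrank_add_finrank _ _
        _ ≤ 1 + m := add_le_add ((finrank_span_le_card _).trans (by simp)) ih
        _ = m + 1 := by omega
    · rw [Spart_succ' y m hm]; omega

lemma span_range_finrank_le [FiniteDimensional F V] {k : ℕ} (y : Fin k → V) :
    finrank F (Submodule.span F (Set.range y)) ≤ k := by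
  rw [← Spart_full]; exact Spart_finrank y k

/-- one-step extension lemma -/
lemma aux_ext (U W V0 : Submodule F V) (hUW : U ⊓ W ≤ V0) (y : V) (hy : y ∉ W ⊔ U) :
    (U ⊔ Submodule.span F {y}) ⊓ W ≤ V0 := by
  intro z hz
  rw [Submodule.mem_inf] at hz
  obtain ⟨hz1, hz2⟩ := hz
  rw [Submodule.mem_sup] at hz1
  obtain ⟨u, hu, w, hw, rfl⟩ := hz1
  rw [Submodule.mem_span_singleton] at hw
  obtain ⟨c, rfl⟩ := hw
  by_cases hc : c = 0
  · subst hc; rw [zero_smul, add_zero] at hz2 ⊢; exact hUW ⟨hu, hz2⟩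
  · exfalso; apply hy
    have : y = c⁻¹ • ((u + c • y) - u) := by
      rw [add_sub_cancel_left, smul_smul, inv_mul_cancel₀ hc, one_smul]
    rw [this]
    exact Submodule.smul_mem _ _ (Submodule.sub_mem _
      (Submodule.mem_sup_left hz2) (Submodule.mem_sup_right hu))

lemma span_range_le {k : ℕ} (y : Fin k → V) (W : Submodule F V) (hy : ∀ b, y b ∈ W) :
    Submodule.span F (Set.range y) ≤ W := by
  rw [Submodule.span_le]; rintro _ ⟨b, rfl⟩; exact hy b

/-- main geometric lemma -/
lemma aux_geom [FiniteDimensional F V]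
    (t : ℕ) (ht : 1 ≤ t) (P : ℕ → Submodule F V)
    (hPm : ∀ i j : ℕ, i ≤ j → j < t → P i ≤ P j)
    (k : Fin t → ℕ) (y : (a : Fin t) → Fin (k a) → V)
    (hy : ∀ (a : Fin t) b, y a b ∈ P a)
    (hE : ∀ (a : Fin t), 0 < (a : ℕ) → ∀ b : Fin (k a),
      y a b ∉ P ((a : ℕ) - 1) ⊔ Spart F (y a) b) :
    ∀ a : Fin t,
      (∑ a' ∈ Finset.Iic a, Submodule.span F (Set.range (y a'))) ⊓ P 0
        ≤ Submodule.span F (Set.range (y ⟨0, ht⟩)) := by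
  -- the partial sums
  have hTle : ∀ a : Fin t, (∑ a' ∈ Finset.Iic a, Submodule.span F (Set.range (y a'))) ≤ P a := by
    intro a
    calc ∑ a' ∈ Finset.Iic a, Submodule.span F (Set.range (y a'))
        ≤ ∑ a' ∈ Finset.Iic a, P a := by
          apply Finset.sum_le_sum
          intro a' ha'
          exact (span_range_le (y a') (P a') (hy a')).trans
            (hPm a' a (by exact_mod_cast Finset.mem_Iic.mp ha') a.isLt)
      _ ≤ P a := by
          induction (Finset.Iic a) using Finset.induction with
          | empty => simp
          | insert _ _ hx ih =>
            rw [Finset.sum_insert hx, Submodule.add_eq_sup]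
            exact sup_le le_rfl ih
  rintro ⟨m, hmt⟩
  induction m with
  | zero =>
    have h0 : Finset.Iic (⟨0, hmt⟩ : Fin t) = {⟨0, hmt⟩} := by
      ext i; simp only [Finset.mem_Iic, Finset.mem_singleton, Fin.le_def, Fin.ext_iff]; omega
    rw [h0, Finset.sum_singleton]
    exact inf_le_left
  | succ m ih =>
    have hmt' : m < t := by omega
    have hins : Finset.Iic (⟨m + 1, hmt⟩ : Fin t)
        = insert ⟨m + 1, hmt⟩ (Finset.Iic (⟨m, hmt'⟩ : Fin t)) := by
      ext i
      simp only [Finset.mem_Iic, Finset.mem_insert, Fin.le_def, Fin.ext_iff]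
      omega
    have hnm : (⟨m + 1, hmt⟩ : Fin t) ∉ Finset.Iic (⟨m, hmt'⟩ : Fin t) := by
      simp [Finset.mem_Iic, Fin.le_def]
    rw [hins, Finset.sum_insert hnm, Submodule.add_eq_sup]
    set T := ∑ a' ∈ Finset.Iic (⟨m, hmt'⟩ : Fin t), Submodule.span F (Set.range (y a'))
    have ihm := ih hmt'
    -- inner induction on b
    have inner : ∀ mb : ℕ, mb ≤ k ⟨m + 1, hmt⟩ →
        (T ⊔ Spart F (y ⟨m + 1, hmt⟩) mb) ⊓ P 0 ≤ Submodule.span F (Set.range (y ⟨0, ht⟩)) := by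
      intro mb
      induction mb with
      | zero => intro _; rw [Spart_zero, sup_bot_eq]; exact ihm
      | succ mb ihb =>
        intro hmb
        have hmbk : mb < k ⟨m + 1, hmt⟩ := by omega
        rw [Spart_succ _ _ hmbk, sup_comm (Submodule.span F _) _, ← sup_assoc]
        apply aux_ext _ _ _ (ihb (by omega))
        intro hmem
        apply hE ⟨m + 1, hmt⟩ (by simp) ⟨mb, hmbk⟩
        have hsub : P 0 ⊔ (T ⊔ Spart F (y ⟨m + 1, hmt⟩) mb)
            ≤ P m ⊔ Spart F (y ⟨m + 1, hmt⟩) mb := by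
          apply sup_le
          · exact le_sup_of_le_left (hPm 0 m (by omega) hmt')
          · apply sup_le
            · exact le_sup_of_le_left ((hTle ⟨m, hmt'⟩).trans le_rfl)
            · exact le_sup_right
        have : ((⟨m + 1, hmt⟩ : Fin t) : ℕ) - 1 = m := by simp
        rw [this]
        exact hsub hmem
    have := inner (k ⟨m + 1, hmt⟩) le_rfl
    rw [Spart_full] at this
    rw [sup_comm]
    exact this


section
variable {F : Type} [Field F] [Fintype F] {V : Type} [AddCommGroup V] [Module F V] [Fintype V]

/-- sample space -/
abbrev Omg (t : ℕ) (ku kv : Fin t → ℕ) (PP : Fin t → Submodule F V) : Type :=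
  (j : Fin t) → ((Fin (ku j) → ↥(PP j)) × (Fin (kv j) → ↥(PP j)))

variable {t : ℕ} {ku kv : Fin t → ℕ} {PP : Fin t → Submodule F V}

noncomputable def updV (a : Fin t) (b : Fin (kv a)) (ω : Omg t ku kv PP) (x : ↥(PP a)) :
    Omg t ku kv PP :=
  Function.update ω a ((ω a).1, Function.update (ω a).2 b x)

noncomputable def updU (a : Fin t) (b : Fin (ku a)) (ω : Omg t ku kv PP) (x : ↥(PP a)) :
    Omg t ku kv PP :=
  Function.update ω a ((Function.update (ω a).1 b x, (ω a).2))

lemma updV_self (a : Fin t) (b : Fin (kv a)) (ω : Omg t ku kv PP) (x : ↥(PP a)) :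
    ((updV a b ω x) a).2 b = x := by simp [updV]

lemma updU_self (a : Fin t) (b : Fin (ku a)) (ω : Omg t ku kv PP) (x : ↥(PP a)) :
    ((updU a b ω x) a).1 b = x := by simp [updU]

lemma count_event_v [Nonempty (Omg t ku kv PP)]
    (a : Fin t) (b : Fin (kv a))
    (Q : Omg t ku kv PP → Prop) (W : Omg t ku kv PP → Submodule F V)
    (Bad : Omg t ku kv PP → Prop) [DecidablePred Bad]
    (hBad : ∀ ω, Bad ω ↔ (Q ω ∧ (((ω a).2 b : V) ∈ W ω)))
    (hQ : ∀ ω x, Q (updV a b ω x) ↔ Q ω)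
    (hW : ∀ ω x, W (updV a b ω x) = W ω)
    (hproper : ∀ ω, Q ω → ¬ PP a ≤ W ω) :
    Fintype.card F *
      (Finset.univ.filter Bad).card
      ≤ Fintype.card (Omg t ku kv PP) := by
  classical
  have hne : Nonempty ↥(PP a) := ⟨0⟩
  apply aux_count_upd (updV a b) (fun ω => (ω a).2 b)
  · intro ω x; exact updV_self a b ω x
  · intro ω; simp [updV]
  · intro ω x y; simp [updV, Function.update_idem]
  · intro ω
    by_cases hq : Q ω
    · have hcond : ∀ x : ↥(PP a),
          Bad (updV a b ω x)
          ↔ (x ∈ (W ω).comap (PP a).subtype) := by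
        intro x
        rw [hBad, hQ, hW, updV_self]
        simp [Submodule.mem_comap, hq]
      calc Fintype.card F * (Finset.univ.filter (fun x : ↥(PP a) =>
              Bad (updV a b ω x))).card
          = Fintype.card F * (Finset.univ.filter (fun x : ↥(PP a) =>
              x ∈ (W ω).comap (PP a).subtype)).card := by
            exact congrArg (Fintype.card F * ·) (congrArg Finset.card (Finset.filter_congr (fun x _ => hcond x)))
        _ ≤ Fintype.card ↥(PP a) := by
            apply aux_card_subspace
            intro htop
            exact hproper ω hq (Submodule.comap_subtype_eq_top.mp htop)
    · have : ∀ x : ↥(PP a), ¬ Bad (updV a b ω x) := by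
        intro x hx; exact hq ((hQ ω x).mp ((hBad _).mp hx).1)
      rw [Finset.filter_false_of_mem (fun x _ => this x)]
      simp

lemma count_event_u [Nonempty (Omg t ku kv PP)]
    (a : Fin t) (b : Fin (ku a))
    (Q : Omg t ku kv PP → Prop) (W : Omg t ku kv PP → Submodule F V)
    (Bad : Omg t ku kv PP → Prop) [DecidablePred Bad]
    (hBad : ∀ ω, Bad ω ↔ (Q ω ∧ (((ω a).1 b : V) ∈ W ω)))
    (hQ : ∀ ω x, Q (updU a b ω x) ↔ Q ω)
    (hW : ∀ ω x, W (updU a b ω x) = W ω)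
    (hproper : ∀ ω, Q ω → ¬ PP a ≤ W ω) :
    Fintype.card F *
      (Finset.univ.filter Bad).card
      ≤ Fintype.card (Omg t ku kv PP) := by
  classical
  have hne : Nonempty ↥(PP a) := ⟨0⟩
  apply aux_count_upd (updU a b) (fun ω => (ω a).1 b)
  · intro ω x; exact updU_self a b ω x
  · intro ω; simp [updU]
  · intro ω x y; simp [updU, Function.update_idem]
  · intro ω
    by_cases hq : Q ω
    · have hcond : ∀ x : ↥(PP a),
          Bad (updU a b ω x)
          ↔ (x ∈ (W ω).comap (PP a).subtype) := by
        intro x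
        rw [hBad, hQ, hW, updU_self]
        simp [Submodule.mem_comap, hq]
      calc Fintype.card F * (Finset.univ.filter (fun x : ↥(PP a) =>
              Bad (updU a b ω x))).card
          = Fintype.card F * (Finset.univ.filter (fun x : ↥(PP a) =>
              x ∈ (W ω).comap (PP a).subtype)).card := by
            exact congrArg (Fintype.card F * ·) (congrArg Finset.card (Finset.filter_congr (fun x _ => hcond x)))
        _ ≤ Fintype.card ↥(PP a) := by
            apply aux_card_subspace
            intro htop
            exact hproper ω hq (Submodule.comap_subtype_eq_top.mp htop)
    · have : ∀ x : ↥(PP a), ¬ Bad (updU a b ω x) := by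
        intro x hx; exact hq ((hQ ω x).mp ((hBad _).mp hx).1)
      rw [Finset.filter_false_of_mem (fun x _ => this x)]
      simp

/-- union bound -/
lemma aux_exists_count {Ω ι : Type} [Fintype Ω] [Fintype ι] (p : ι → Ω → Prop) :
    (Finset.univ.filter (fun ω => ∃ i, p i ω)).card
      ≤ ∑ i : ι, (Finset.univ.filter (p i)).card := by
  classical
  calc (Finset.univ.filter (fun ω => ∃ i, p i ω)).card
      ≤ (Finset.univ.biUnion (fun i : ι => Finset.univ.filter (p i))).card := by
        apply Finset.card_le_card
        intro ω hω
        rw [Finset.mem_filter] at hω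
        obtain ⟨-, i, hi⟩ := hω
        exact Finset.mem_biUnion.mpr ⟨i, Finset.mem_univ i, Finset.mem_filter.mpr ⟨Finset.mem_univ ω, hi⟩⟩
    _ ≤ ∑ i : ι, (Finset.univ.filter (p i)).card := Finset.card_biUnion_le

end


section
variable {F : Type} [Field F] {V : Type} [AddCommGroup V] [Module F V]

lemma Spart_congr {k : ℕ} (y y' : Fin k → V) (m : ℕ)
    (h : ∀ b : Fin k, (b : ℕ) < m → y b = y' b) : Spart F y m = Spart F y' m := by
  unfold Spart
  exact congrArg (Submodule.span F) (Set.image_congr h)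

lemma sum_submodule_mono {ι : Type} (s s' : Finset ι) (h : s ⊆ s') (f : ι → Submodule F V) :
    ∑ i ∈ s, f i ≤ ∑ i ∈ s', f i := by
  classical
  calc ∑ i ∈ s, f i ≤ ∑ i ∈ s' \ s, f i + ∑ i ∈ s, f i := by
        rw [Submodule.add_eq_sup]; exact le_sup_right
    _ = ∑ i ∈ s', f i := Finset.sum_sdiff h

variable {t : ℕ} {ku kv : Fin t → ℕ} {PP : Fin t → Submodule F V}

/-- the subspace that the (a,b)-th v-sample must avoid -/
noncomputable def Wv (Pn : ℕ → Submodule F V) (a : Fin t) (b : ℕ) (ω : Omg t ku kv PP) :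
    Submodule F V :=
  Pn ((a : ℕ) - 1) ⊔ Spart F (fun b' => ((ω a).2 b' : V)) b

noncomputable def Wu (Pn : ℕ → Submodule F V) (a : Fin t) (b : ℕ) (ω : Omg t ku kv PP) :
    Submodule F V :=
  Pn ((a : ℕ) - 1) ⊔ Spart F (fun b' => ((ω a).1 b' : V)) b

def BV (Pn : ℕ → Submodule F V) (p : Σ a : Fin t, Fin (kv a)) (ω : Omg t ku kv PP) : Prop :=
  0 < (p.1 : ℕ) ∧ ((ω p.1).2 p.2 : V) ∈ Wv Pn p.1 p.2 ω

def BU (Pn : ℕ → Submodule F V) (p : Σ a : Fin t, Fin (ku a)) (ω : Omg t ku kv PP) : Prop :=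
  0 < (p.1 : ℕ) ∧ ((ω p.1).1 p.2 : V) ∈ Wu Pn p.1 p.2 ω

def GoodV (Pn : ℕ → Submodule F V) (ω : Omg t ku kv PP) : Prop := ∀ p, ¬ BV Pn p ω
def GoodU (Pn : ℕ → Submodule F V) (ω : Omg t ku kv PP) : Prop := ∀ p, ¬ BU Pn p ω

noncomputable def TVp (ω : Omg t ku kv PP) (j : Fin t) : Submodule F V :=
  ∑ a ∈ Finset.Iic j, Submodule.span F (Set.range (fun b => ((ω a).2 b : V)))

noncomputable def TUp (ω : Omg t ku kv PP) (j : Fin t) : Submodule F V :=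
  ∑ a ∈ Finset.Iic j, Submodule.span F (Set.range (fun b => ((ω a).1 b : V)))

-- evaluation lemmas
lemma updU_snd (a : Fin t) (b : Fin (ku a)) (ω : Omg t ku kv PP) (x : ↥(PP a)) (a' : Fin t) :
    ((updU a b ω x) a').2 = (ω a').2 := by
  by_cases h : a' = a
  · subst h; simp [updU]
  · simp [updU, Function.update_of_ne h]

lemma updV_fst (a : Fin t) (b : Fin (kv a)) (ω : Omg t ku kv PP) (x : ↥(PP a)) (a' : Fin t) :
    ((updV a b ω x) a').1 = (ω a').1 := by
  by_cases h : a' = a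
  · subst h; simp [updV]
  · simp [updV, Function.update_of_ne h]

lemma updV_snd_ne (a : Fin t) (b : Fin (kv a)) (ω : Omg t ku kv PP) (x : ↥(PP a))
    (b' : Fin (kv a)) (h : b' ≠ b) : ((updV a b ω x) a).2 b' = (ω a).2 b' := by
  simp [updV, Function.update_of_ne h]

lemma updU_fst_ne (a : Fin t) (b : Fin (ku a)) (ω : Omg t ku kv PP) (x : ↥(PP a))
    (b' : Fin (ku a)) (h : b' ≠ b) : ((updU a b ω x) a).1 b' = (ω a).1 b' := by
  simp [updU, Function.update_of_ne h]

lemma updV_snd_other (a : Fin t) (b : Fin (kv a)) (ω : Omg t ku kv PP) (x : ↥(PP a))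
    (a' : Fin t) (h : a' ≠ a) : ((updV a b ω x) a').2 = (ω a').2 := by
  simp [updV, Function.update_of_ne h]

lemma updU_fst_other (a : Fin t) (b : Fin (ku a)) (ω : Omg t ku kv PP) (x : ↥(PP a))
    (a' : Fin t) (h : a' ≠ a) : ((updU a b ω x) a').1 = (ω a').1 := by
  simp [updU, Function.update_of_ne h]

-- invariance lemmas
lemma Wv_updV (Pn : ℕ → Submodule F V) (a : Fin t) (b : Fin (kv a)) (ω : Omg t ku kv PP)
    (x : ↥(PP a)) : Wv Pn a (b : ℕ) (updV a b ω x) = Wv Pn a (b : ℕ) ω := by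
  unfold Wv
  congr 1
  apply Spart_congr
  intro b' hb'
  rw [updV_snd_ne a b ω x b' (by intro h; subst h; omega)]

lemma Wu_updU (Pn : ℕ → Submodule F V) (a : Fin t) (b : Fin (ku a)) (ω : Omg t ku kv PP)
    (x : ↥(PP a)) : Wu Pn a (b : ℕ) (updU a b ω x) = Wu Pn a (b : ℕ) ω := by
  unfold Wu
  congr 1
  apply Spart_congr
  intro b' hb'
  rw [updU_fst_ne a b ω x b' (by intro h; subst h; omega)]

lemma GoodV_updU (Pn : ℕ → Submodule F V) (a : Fin t) (b : Fin (ku a)) (ω : Omg t ku kv PP)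
    (x : ↥(PP a)) : GoodV Pn (updU a b ω x) ↔ GoodV Pn ω := by
  unfold GoodV BV Wv
  simp only [updU_snd]

lemma TVp_updU (a : Fin t) (b : Fin (ku a)) (ω : Omg t ku kv PP) (x : ↥(PP a)) (j : Fin t) :
    TVp (updU a b ω x) j = TVp ω j := by
  unfold TVp
  apply Finset.sum_congr rfl
  intro a' _
  rw [updU_snd]

lemma TUp_updV (a : Fin t) (b : Fin (kv a)) (ω : Omg t ku kv PP) (x : ↥(PP a)) (j : Fin t) :
    TUp (updV a b ω x) j = TUp ω j := by
  unfold TUp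
  apply Finset.sum_congr rfl
  intro a' _
  rw [updV_fst]

lemma GoodU_updV' (Pn : ℕ → Submodule F V) (a : Fin t) (b : Fin (kv a)) (ω : Omg t ku kv PP)
    (x : ↥(PP a)) : GoodU Pn (updV a b ω x) ↔ GoodU Pn ω := by
  unfold GoodU BU Wu
  simp only [updV_fst]

end

section
lemma filter_or_card {Ω : Type} [Fintype Ω] (r p q : Ω → Prop)
    [DecidablePred r] [DecidablePred p] [DecidablePred q]
    (hr : ∀ ω, r ω ↔ (p ω ∨ q ω)) :
    (Finset.univ.filter r).card
      ≤ (Finset.univ.filter p).card + (Finset.univ.filter q).card := by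
  classical
  have h1 : Finset.univ.filter r ⊆ (Finset.univ.filter p) ∪ (Finset.univ.filter q) := by
    intro ω hω
    rw [Finset.mem_filter] at hω
    rcases (hr ω).mp hω.2 with h | h
    · exact Finset.mem_union_left _ (Finset.mem_filter.mpr ⟨hω.1, h⟩)
    · exact Finset.mem_union_right _ (Finset.mem_filter.mpr ⟨hω.1, h⟩)
  exact (Finset.card_le_card h1).trans (Finset.card_union_le _ _)
end


/-- Lemma 5: consecutive subspace sampling. Subspaces and samples are
0-indexed: `P j` is the paper's `Π(j)` (for `j < t`), the sample at index `j` (drawn from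
`P j`) is the paper's `π(j+1)`, and `k j` is the paper's `k(j+1)`. For fixed parameters
there is a constant `C` such that for every prime power `q` and every chain
`P 0 ⊂ ⋯ ⊂ P (t−1)` of subspaces of `F_q^n` with `dim (P j) = d j`, if for each `j < t`
the subspace `π_u(j)` is the span of `ku j` uniformly random vectors of `P j` and
`π_v(j)` the span of `kv j` uniformly random vectors of `P j` (all independent), and
`Π_u(i) = π_u(0) + ⋯ + π_u(i)`, `Π_v(i) = π_v(0) + ⋯ + π_v(i)`, then with probability at
least `1 − C/q`: `Π_u(i) ⊄ Π_v(j)` and `Π_v(j) ⊄ Π_u(i)` for all `i, j < t`. -/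
theorem stmt_7 (t n : ℕ) (ht : 1 ≤ t) (hn : 1 ≤ n)
    (d ku kv : ℕ → ℕ)
    (hdmono : ∀ j, j + 1 < t → d j < d (j + 1))
    (hdn : ∀ j, j < t → d j ≤ n)
    (hku0 : 1 ≤ ku 0) (hku0' : ku 0 < d 0)
    (hkv0 : 1 ≤ kv 0) (hkv0' : kv 0 < d 0)
    (hku : ∀ j, 1 ≤ j → j < t → ku j ≤ d j - d (j - 1))
    (hkv : ∀ j, 1 ≤ j → j < t → kv j ≤ d j - d (j - 1)) :
    ∃ C : ℝ, ∀ (q : ℕ), IsPrimePow q →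
      ∀ (F : Type) [Field F] [Fintype F], Fintype.card F = q →
      ∀ (P : ℕ → Submodule F (Fin n → F)),
        (∀ j, j + 1 < t → P j < P (j + 1)) →
        (∀ j, j < t → Module.finrank F ↥(P j) = d j) →
      1 - C / q ≤
        ((Finset.univ.filter
            (fun ω : (j : Fin t) →
                ((Fin (ku j) → ↥(P j)) × (Fin (kv j) → ↥(P j))) =>
              ∀ i j : Fin t,
                ¬ (∑ a ∈ Finset.Iic i, Submodule.span F
                      (Set.range (fun b => ((ω a).1 b : Fin n → F))) ≤
                    ∑ a ∈ Finset.Iic j, Submodule.span F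
                      (Set.range (fun b => ((ω a).2 b : Fin n → F)))) ∧
                ¬ (∑ a ∈ Finset.Iic j, Submodule.span F
                      (Set.range (fun b => ((ω a).2 b : Fin n → F))) ≤
                    ∑ a ∈ Finset.Iic i, Submodule.span F
                      (Set.range (fun b => ((ω a).1 b : Fin n → F)))))).card : ℝ)
          / (Fintype.card ((j : Fin t) →
              ((Fin (ku j) → ↥(P j)) × (Fin (kv j) → ↥(P j)))) : ℝ) := by
  classical
  set KV : ℕ := Fintype.card (Σ a : Fin t, Fin (kv (a : ℕ))) with hKV
  set KU : ℕ := Fintype.card (Σ a : Fin t, Fin (ku (a : ℕ))) with hKU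
  refine ⟨((KV + KU + 2 : ℕ) : ℝ), ?_⟩
  intro q hq F _F1 _F2 hcardF P hPlt hPrank
  have hqpos : 0 < q := hq.pos
  -- chain monotonicity
  have hPm : ∀ i j : ℕ, i ≤ j → j < t → P i ≤ P j := by
    intro i j hij hjt
    induction j with
    | zero =>
      have : i = 0 := by omega
      subst this; exact le_rfl
    | succ m ihm =>
      by_cases hi : i = m + 1
      · subst hi; exact le_rfl
      · exact (ihm (by omega) (by omega)).trans (hPlt m (by omega)).le
  -- abbreviations
  let kuf : Fin t → ℕ := fun a => ku (a : ℕ)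
  let kvf : Fin t → ℕ := fun a => kv (a : ℕ)
  let PPf : Fin t → Submodule F (Fin n → F) := fun a => P (a : ℕ)
  let z : Fin t := ⟨0, ht⟩
  let lastI : Fin t := ⟨t - 1, by omega⟩
  let u0 : Fin (kuf z) := ⟨0, by show 0 < ku 0; omega⟩
  let v0 : Fin (kvf z) := ⟨0, by show 0 < kv 0; omega⟩
  haveI : Nonempty (Omg t kuf kvf PPf) := ⟨fun _ => (fun _ => 0, fun _ => 0)⟩
  -- the four bad events
  let BadA : Omg t kuf kvf PPf → Prop := fun ω => ∃ p : Σ a : Fin t, Fin (kvf a), BV P p ω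
  let BadB : Omg t kuf kvf PPf → Prop := fun ω => ∃ p : Σ a : Fin t, Fin (kuf a), BU P p ω
  let BadC : Omg t kuf kvf PPf → Prop :=
    fun ω => GoodV P ω ∧ (((ω z).1 u0 : Fin n → F) ∈ TVp ω lastI)
  let BadD : Omg t kuf kvf PPf → Prop :=
    fun ω => GoodU P ω ∧ (((ω z).2 v0 : Fin n → F) ∈ TUp ω lastI)
  -- implication from failure to bad events
  have hz_le : ∀ i' : Fin t, z ≤ i' := by
    intro i'; rw [Fin.le_def]; exact Nat.zero_le _
  have hle_last : ∀ i' : Fin t, i' ≤ lastI := by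
    intro i'; rw [Fin.le_def]; have := i'.isLt; show (i' : ℕ) ≤ t - 1; omega
  have hImp : ∀ ω : Omg t kuf kvf PPf,
      ¬ (∀ i j : Fin t, ¬(TUp ω i ≤ TVp ω j) ∧ ¬(TVp ω j ≤ TUp ω i)) →
      (BadA ω ∨ BadB ω ∨ BadC ω ∨ BadD ω) := by
    intro ω hω
    rw [not_forall] at hω; obtain ⟨i, hi⟩ := hω
    rw [not_forall] at hi; obtain ⟨j, hij⟩ := hi
    rw [not_and_or, not_not, not_not] at hij
    cases hij with
    | inl h =>
      have hu : ((ω z).1 u0 : Fin n → F) ∈ TVp ω lastI := by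
        have h1 : ((ω z).1 u0 : Fin n → F) ∈
            Submodule.span F (Set.range (fun b => ((ω z).1 b : Fin n → F))) :=
          Submodule.subset_span ⟨u0, rfl⟩
        have h2 : Submodule.span F (Set.range (fun b => ((ω z).1 b : Fin n → F)))
            ≤ TUp ω i := by
          have e1 : Submodule.span F (Set.range (fun b => ((ω z).1 b : Fin n → F)))
              = ∑ a ∈ ({z} : Finset (Fin t)),
                  Submodule.span F (Set.range (fun b => ((ω a).1 b : Fin n → F))) := by
            rw [Finset.sum_singleton]
          rw [e1]
          exact sum_submodule_mono _ _
            (by simp [Finset.singleton_subset_iff, Finset.mem_Iic, hz_le i]) _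
        have h4 : TVp ω j ≤ TVp ω lastI :=
          sum_submodule_mono _ _ (Finset.Iic_subset_Iic.mpr (hle_last j)) _
        exact h4 (h (h2 h1))
      by_cases hgv : GoodV P ω
      · exact Or.inr (Or.inr (Or.inl ⟨hgv, hu⟩))
      · left
        obtain ⟨p, hp⟩ := not_forall.mp hgv
        exact ⟨p, not_not.mp hp⟩
    | inr h =>
      have hv : ((ω z).2 v0 : Fin n → F) ∈ TUp ω lastI := by
        have h1 : ((ω z).2 v0 : Fin n → F) ∈
            Submodule.span F (Set.range (fun b => ((ω z).2 b : Fin n → F))) :=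
          Submodule.subset_span ⟨v0, rfl⟩
        have h2 : Submodule.span F (Set.range (fun b => ((ω z).2 b : Fin n → F)))
            ≤ TVp ω j := by
          have e1 : Submodule.span F (Set.range (fun b => ((ω z).2 b : Fin n → F)))
              = ∑ a ∈ ({z} : Finset (Fin t)),
                  Submodule.span F (Set.range (fun b => ((ω a).2 b : Fin n → F))) := by
            rw [Finset.sum_singleton]
          rw [e1]
          exact sum_submodule_mono _ _
            (by simp [Finset.singleton_subset_iff, Finset.mem_Iic, hz_le j]) _
        have h4 : TUp ω i ≤ TUp ω lastI :=
          sum_submodule_mono _ _ (Finset.Iic_subset_Iic.mpr (hle_last i)) _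
        exact h4 (h (h2 h1))
      by_cases hgu : GoodU P ω
      · exact Or.inr (Or.inr (Or.inr ⟨hgu, hv⟩))
      · right; left
        obtain ⟨p, hp⟩ := not_forall.mp hgu
        exact ⟨p, not_not.mp hp⟩
  -- counting event A
  have cA : Fintype.card F * (Finset.univ.filter BadA).card
      ≤ KV * Fintype.card (Omg t kuf kvf PPf) := by
    calc Fintype.card F * (Finset.univ.filter BadA).card
        ≤ Fintype.card F * ∑ p : (Σ a : Fin t, Fin (kvf a)),
            (Finset.univ.filter (BV P p)).card :=
          Nat.mul_le_mul_left _ (aux_exists_count _)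
      _ = ∑ p : (Σ a : Fin t, Fin (kvf a)),
            Fintype.card F * (Finset.univ.filter (BV P p)).card := Finset.mul_sum _ _ _
      _ ≤ ∑ _p : (Σ a : Fin t, Fin (kvf a)), Fintype.card (Omg t kuf kvf PPf) := by
          apply Finset.sum_le_sum
          rintro ⟨a, b⟩ -
          refine count_event_v a b (fun _ => 0 < (a : ℕ)) (Wv P a (b : ℕ)) (BV P ⟨a, b⟩)
            (fun ω => Iff.rfl) (fun ω x => Iff.rfl)
            (fun ω x => Wv_updV P a b ω x) ?_
          intro ω ha hle
          have h1 : Module.finrank F (Wv P a (b : ℕ) ω) ≤ d ((a : ℕ) - 1) + (b : ℕ) := by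
            refine (Submodule.finrank_add_le_finrank_add_finrank _ _).trans ?_
            exact add_le_add (le_of_eq (hPrank _ (by have := a.isLt; omega))) (Spart_finrank _ _)
          have h2 := Submodule.finrank_mono hle
          rw [hPrank (a : ℕ) a.isLt] at h2
          have hb := b.isLt
          have hkva := hkv (a : ℕ) ha a.isLt
          have hb2 : (b : ℕ) < kv (a : ℕ) := hb
          have hda := hdmono ((a : ℕ) - 1) (by have := a.isLt; omega)
          have he : (a : ℕ) - 1 + 1 = (a : ℕ) := by omega
          rw [he] at hda
          omega
      _ = KV * Fintype.card (Omg t kuf kvf PPf) := by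
          rw [Finset.sum_const, Finset.card_univ, smul_eq_mul]
  -- counting event B
  have cB : Fintype.card F * (Finset.univ.filter BadB).card
      ≤ KU * Fintype.card (Omg t kuf kvf PPf) := by
    calc Fintype.card F * (Finset.univ.filter BadB).card
        ≤ Fintype.card F * ∑ p : (Σ a : Fin t, Fin (kuf a)),
            (Finset.univ.filter (BU P p)).card :=
          Nat.mul_le_mul_left _ (aux_exists_count _)
      _ = ∑ p : (Σ a : Fin t, Fin (kuf a)),
            Fintype.card F * (Finset.univ.filter (BU P p)).card := Finset.mul_sum _ _ _
      _ ≤ ∑ _p : (Σ a : Fin t, Fin (kuf a)), Fintype.card (Omg t kuf kvf PPf) := by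
          apply Finset.sum_le_sum
          rintro ⟨a, b⟩ -
          refine count_event_u a b (fun _ => 0 < (a : ℕ)) (Wu P a (b : ℕ)) (BU P ⟨a, b⟩)
            (fun ω => Iff.rfl) (fun ω x => Iff.rfl)
            (fun ω x => Wu_updU P a b ω x) ?_
          intro ω ha hle
          have h1 : Module.finrank F (Wu P a (b : ℕ) ω) ≤ d ((a : ℕ) - 1) + (b : ℕ) := by
            refine (Submodule.finrank_add_le_finrank_add_finrank _ _).trans ?_
            exact add_le_add (le_of_eq (hPrank _ (by have := a.isLt; omega))) (Spart_finrank _ _)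
          have h2 := Submodule.finrank_mono hle
          rw [hPrank (a : ℕ) a.isLt] at h2
          have hb := b.isLt
          have hkua := hku (a : ℕ) ha a.isLt
          have hb2 : (b : ℕ) < ku (a : ℕ) := hb
          have hda := hdmono ((a : ℕ) - 1) (by have := a.isLt; omega)
          have he : (a : ℕ) - 1 + 1 = (a : ℕ) := by omega
          rw [he] at hda
          omega
      _ = KU * Fintype.card (Omg t kuf kvf PPf) := by
          rw [Finset.sum_const, Finset.card_univ, smul_eq_mul]
  -- counting event C
  have cC : Fintype.card F * (Finset.univ.filter BadC).card
      ≤ Fintype.card (Omg t kuf kvf PPf) := by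
    refine count_event_u z u0 (GoodV P) (fun ω => TVp ω lastI) BadC
      (fun ω => Iff.rfl)
      (fun ω x => GoodV_updU P z u0 ω x) (fun ω x => TVp_updU z u0 ω x lastI) ?_
    intro ω hg hle
    have hgeom := aux_geom t ht P hPm kvf (fun a b => ((ω a).2 b : Fin n → F))
      (fun a b => ((ω a).2 b).2)
      (fun a ha b hmem => hg ⟨a, b⟩ ⟨ha, hmem⟩) lastI
    have hP0 : P 0 ≤ Submodule.span F
        (Set.range (fun b => ((ω (⟨0, ht⟩ : Fin t)).2 b : Fin n → F))) := by
      intro v hv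
      exact hgeom (Submodule.mem_inf.mpr ⟨hle hv, hv⟩)
    have h5 := Submodule.finrank_mono hP0
    rw [hPrank 0 (by omega)] at h5
    have h6 := span_range_finrank_le (F := F) (fun b => ((ω (⟨0, ht⟩ : Fin t)).2 b : Fin n → F))
    have h8 : d 0 ≤ kv 0 := le_trans h5 h6
    omega
  -- counting event D
  have cD : Fintype.card F * (Finset.univ.filter BadD).card
      ≤ Fintype.card (Omg t kuf kvf PPf) := by
    refine count_event_v z v0 (GoodU P) (fun ω => TUp ω lastI) BadD
      (fun ω => Iff.rfl)
      (fun ω x => GoodU_updV' P z v0 ω x) (fun ω x => TUp_updV z v0 ω x lastI) ?_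
    intro ω hg hle
    have hgeom := aux_geom t ht P hPm kuf (fun a b => ((ω a).1 b : Fin n → F))
      (fun a b => ((ω a).1 b).2)
      (fun a ha b hmem => hg ⟨a, b⟩ ⟨ha, hmem⟩) lastI
    have hP0 : P 0 ≤ Submodule.span F
        (Set.range (fun b => ((ω (⟨0, ht⟩ : Fin t)).1 b : Fin n → F))) := by
      intro v hv
      exact hgeom (Submodule.mem_inf.mpr ⟨hle hv, hv⟩)
    have h5 := Submodule.finrank_mono hP0
    rw [hPrank 0 (by omega)] at h5
    have h6 := span_range_finrank_le (F := F) (fun b => ((ω (⟨0, ht⟩ : Fin t)).1 b : Fin n → F))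
    have h8 : d 0 ≤ ku 0 := le_trans h5 h6
    omega
  -- assembly
  rw [hcardF] at cA cB cC cD
  set M : ℕ := Fintype.card (Omg t kuf kvf PPf) with hM
  set A : ℕ := (Finset.univ.filter (fun ω : Omg t kuf kvf PPf =>
      ∀ i j : Fin t, ¬(TUp ω i ≤ TVp ω j) ∧ ¬(TVp ω j ≤ TUp ω i))).card with hA
  set B : ℕ := (Finset.univ.filter (fun ω : Omg t kuf kvf PPf =>
      ¬ ∀ i j : Fin t, ¬(TUp ω i ≤ TVp ω j) ∧ ¬(TVp ω j ≤ TUp ω i))).card with hB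
  have hsplit : A + B = M := by
    rw [hA, hB, hM, Finset.card_filter_add_card_filter_not]
    exact Finset.card_univ
  have hBbound : q * B ≤ (KV + KU + 2) * M := by
    have hsub : B ≤ (Finset.univ.filter
        (fun ω : Omg t kuf kvf PPf => BadA ω ∨ BadB ω ∨ BadC ω ∨ BadD ω)).card := by
      rw [hB]
      apply Finset.card_le_card
      apply Finset.monotone_filter_right
      intro ω _ hω
      exact hImp ω hω
    have step1 : (Finset.univ.filter
        (fun ω : Omg t kuf kvf PPf => BadA ω ∨ BadB ω ∨ BadC ω ∨ BadD ω)).card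
        ≤ (Finset.univ.filter BadA).card + (Finset.univ.filter
            (fun ω : Omg t kuf kvf PPf => BadB ω ∨ BadC ω ∨ BadD ω)).card :=
      filter_or_card _ _ _ (fun ω => Iff.rfl)
    have step2 : (Finset.univ.filter
        (fun ω : Omg t kuf kvf PPf => BadB ω ∨ BadC ω ∨ BadD ω)).card
        ≤ (Finset.univ.filter BadB).card + (Finset.univ.filter
            (fun ω : Omg t kuf kvf PPf => BadC ω ∨ BadD ω)).card :=
      filter_or_card _ _ _ (fun ω => Iff.rfl)
    have step3 : (Finset.univ.filter
        (fun ω : Omg t kuf kvf PPf => BadC ω ∨ BadD ω)).card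
        ≤ (Finset.univ.filter BadC).card + (Finset.univ.filter BadD).card :=
      filter_or_card _ _ _ (fun ω => Iff.rfl)
    have hunion : (Finset.univ.filter
        (fun ω : Omg t kuf kvf PPf => BadA ω ∨ BadB ω ∨ BadC ω ∨ BadD ω)).card
        ≤ (Finset.univ.filter BadA).card + ((Finset.univ.filter BadB).card
          + ((Finset.univ.filter BadC).card + (Finset.univ.filter BadD).card)) :=
      step1.trans (Nat.add_le_add_left (step2.trans (Nat.add_le_add_left step3 _)) _)
    calc q * B ≤ q * ((Finset.univ.filter BadA).card + ((Finset.univ.filter BadB).card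
          + ((Finset.univ.filter BadC).card + (Finset.univ.filter BadD).card))) :=
          Nat.mul_le_mul_left _ (hsub.trans hunion)
      _ = q * (Finset.univ.filter BadA).card + (q * (Finset.univ.filter BadB).card
          + (q * (Finset.univ.filter BadC).card + q * (Finset.univ.filter BadD).card)) := by
          ring
      _ ≤ KV * M + (KU * M + (M + M)) :=
          add_le_add cA (add_le_add cB (add_le_add cC cD))
      _ = (KV + KU + 2) * M := by ring
  have hMpos : 0 < M := by rw [hM]; exact Fintype.card_pos
  have hqR : 0 < (q : ℝ) := by exact_mod_cast hqpos
  have hMR : 0 < (M : ℝ) := by exact_mod_cast hMpos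
  have hABM : (A : ℝ) + (B : ℝ) = (M : ℝ) := by exact_mod_cast hsplit
  have hBN : (B : ℝ) / (M : ℝ) ≤ ((KV + KU + 2 : ℕ) : ℝ) / (q : ℝ) := by
    rw [div_le_div_iff₀ hMR hqR, mul_comm]
    exact_mod_cast hBbound
  have hgoal : (A : ℝ) / (M : ℝ) = 1 - (B : ℝ) / (M : ℝ) := by
    field_simp
    linarith
  show (1 : ℝ) - ((KV + KU + 2 : ℕ) : ℝ) / (q : ℝ) ≤ (A : ℝ) / (M : ℝ)
  rw [hgoal]
  linarith
end

section
/- (Corollary 4 to Lemma 5.) Fix t ≥ 1, n ≥ 1, and integers m_a(1), …, m_a(t), m_b(1), …, m_b(t) with m_a(1) ≥ 1 and m_b(1) ≥ 1. There exists a constant C, depending only on these fixed parameters, such that for every prime power q the following holds. Let {Π_u(i)}_{i=0}^{t−1} and {Π_v(i)}_{i=0}^{t−1} be chains of subspaces of F_q^n with Π_u(0) ⊂ ⋯ ⊂ Π_u(t−1), Π_v(0) ⊂ ⋯ ⊂ Π_v(t−1), and Π_u(i) ⊄ Π_v(j) and Π_v(j) ⊄ Π_u(i) for all i, j ∈ {0,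 …, t−1}. For i = 1, …, t let π_a(i) be the span of m_a(i) vectors chosen independently and uniformly at random from Π_u(i−1) and π_b(i) the span of m_b(i) vectors chosen independently and uniformly at random from Π_v(i−1) (all samples mutually independent), and set Π_a(i) = π_a(1) + ⋯ + π_a(i) and Π_b(i) = π_b(1) + ⋯ + π_b(i). Then with probability at least 1 − C/q: Π_a(i) ⊄ Π_b(j) and Π_b(j) ⊄ Π_a(i) for all i, j ∈ {1, …, t}. -/
open scoped Classical
open Finset

set_option synthInstance.maxHeartbeats 1000000
set_option maxHeartbeats 2000000
open scoped Classical
open Finset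


/-- Double counting lemma. -/
lemma stmt8_count_aux {Ω X : Type*} [Fintype Ω] [Fintype X]
    (f : Ω → X) (u : Ω → X → Ω)
    (h1 : ∀ ω x, f (u ω x) = x) (h2 : ∀ ω, u ω (f ω) = ω)
    (h3 : ∀ ω x y, u (u ω x) y = u ω y)
    (p : X → Prop) [DecidablePred p] :
    (univ.filter (fun ω => p (f ω))).card * Fintype.card X
      = (univ.filter p).card * Fintype.card Ω := by
  set g : Ω × X → Ω × X := fun z => (u z.1 z.2, f z.1) with hg
  have hgg : ∀ z, g (g z) = z := by
    intro z; simp [hg, h1, h2, h3]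
  have key : (univ.filter (fun z : Ω × X => p (f z.1))).card
      = (univ.filter (fun z : Ω × X => p z.2)).card := by
    apply Finset.card_bij (fun z _ => g z)
    · intro z hz
      simp only [mem_filter, mem_univ, true_and] at hz ⊢
      exact hz
    · intro a ha b hb hab
      have := congrArg g hab
      rwa [hgg, hgg] at this
    · intro z hz
      refine ⟨g z, ?_, hgg z⟩
      simp only [mem_filter, mem_univ, true_and] at hz ⊢
      show p (f (u z.1 z.2))
      rw [h1]; exact hz
  have l1 : (univ.filter (fun z : Ω × X => p (f z.1)))
      = (univ.filter (fun ω => p (f ω))) ×ˢ (univ : Finset X) := by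
    ext z; simp [Finset.mem_product]
  have l2 : (univ.filter (fun z : Ω × X => p z.2))
      = (univ : Finset Ω) ×ˢ (univ.filter p) := by
    ext z; simp [Finset.mem_product]
  rw [l1, l2, Finset.card_product, Finset.card_product, card_univ, card_univ] at key
  rw [key, mul_comm]

lemma stmt8_chain_mono {α : Type*} [Preorder α] {t : ℕ} (P : ℕ → α)
    (hP : ∀ i, i + 1 < t → P i < P (i + 1)) :
    ∀ i j, i ≤ j → j < t → P i ≤ P j := by
  intro i j hij
  induction hij with
  | refl => exact fun _ => le_refl _
  | step h ih =>
    intro hjt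
    exact (ih (lt_trans (Nat.lt_succ_self _) hjt)).trans (le_of_lt (hP _ hjt))

lemma stmt8_sum_le {R M : Type*} [Semiring R] [AddCommMonoid M] [Module R M]
    {ι : Type*} (s : Finset ι) (f : ι → Submodule R M) (T : Submodule R M)
    (h : ∀ a ∈ s, f a ≤ T) : ∑ a ∈ s, f a ≤ T := by
  classical
  induction s using Finset.induction with
  | empty => simpa using (zero_le T)
  | insert _ _ hx ih =>
    rw [Finset.sum_insert hx, Submodule.add_eq_sup]
    exact sup_le (h _ (Finset.mem_insert_self _ _))
      (ih fun a ha => h a (Finset.mem_insert_of_mem ha))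

lemma stmt8_card_le {F : Type} [Field F] [Fintype F] {n : ℕ}
    {S T : Submodule F (Fin n → F)} (h : S < T) :
    Fintype.card F * Fintype.card ↥S ≤ Fintype.card ↥T := by
  have hS : Fintype.card ↥S = Fintype.card F ^ Module.finrank F ↥S := Module.card_eq_pow_finrank
  have hT : Fintype.card ↥T = Fintype.card F ^ Module.finrank F ↥T := Module.card_eq_pow_finrank
  have hd : Module.finrank F ↥S < Module.finrank F ↥T :=
    Submodule.finrank_lt_finrank_of_lt h
  rw [hS, hT, ← pow_succ']
  exact Nat.pow_le_pow_right Fintype.card_pos hd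


/-- Corollary 4 to Lemma 5. Chains and samples are 0-indexed: `Pu i`, `Pv i`
are the paper's `Π_u(i)`, `Π_v(i)` (for `i < t`), the sample at index `i` (drawn from
`Pu i`, resp. `Pv i`) is the paper's `π_a(i+1)`, resp. `π_b(i+1)`, and `ma i`, `mb i` are
the paper's `m_a(i+1)`, `m_b(i+1)`. For fixed `t, n, ma, mb` (with `ma 0, mb 0 ≥ 1`) there
is a constant `C` such that for every prime power `q` and all chains
`Pu 0 ⊂ ⋯ ⊂ Pu (t−1)` and `Pv 0 ⊂ ⋯ ⊂ Pv (t−1)` of subspaces of `F_q^n` with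
`Pu i ⊄ Pv j` and `Pv j ⊄ Pu i` for all `i, j < t`: if `π_a(i)` is the span of `ma i`
uniformly random vectors of `Pu i` and `π_b(i)` the span of `mb i` uniformly random
vectors of `Pv i` (all independent), and `Π_a(i) = π_a(0) + ⋯ + π_a(i)`,
`Π_b(i) = π_b(0) + ⋯ + π_b(i)`, then with probability at least `1 − C/q`:
`Π_a(i) ⊄ Π_b(j)` and `Π_b(j) ⊄ Π_a(i)` for all `i, j < t`. -/
theorem stmt_8 (t n : ℕ) (ht : 1 ≤ t) (hn : 1 ≤ n)
    (ma mb : ℕ → ℕ) (hma0 : 1 ≤ ma 0) (hmb0 : 1 ≤ mb 0) :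
    ∃ C : ℝ, ∀ (q : ℕ), IsPrimePow q →
      ∀ (F : Type) [Field F] [Fintype F], Fintype.card F = q →
      ∀ (Pu Pv : ℕ → Submodule F (Fin n → F)),
        (∀ i, i + 1 < t → Pu i < Pu (i + 1)) →
        (∀ i, i + 1 < t → Pv i < Pv (i + 1)) →
        (∀ i j, i < t → j < t → ¬ (Pu i ≤ Pv j) ∧ ¬ (Pv j ≤ Pu i)) →
      1 - C / q ≤
        ((Finset.univ.filter
            (fun ω : (i : Fin t) →
                ((Fin (ma i) → ↥(Pu i)) × (Fin (mb i) → ↥(Pv i))) =>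
              ∀ i j : Fin t,
                ¬ (∑ a ∈ Finset.Iic i, Submodule.span F
                      (Set.range (fun b => ((ω a).1 b : Fin n → F))) ≤
                    ∑ a ∈ Finset.Iic j, Submodule.span F
                      (Set.range (fun b => ((ω a).2 b : Fin n → F)))) ∧
                ¬ (∑ a ∈ Finset.Iic j, Submodule.span F
                      (Set.range (fun b => ((ω a).2 b : Fin n → F))) ≤
                    ∑ a ∈ Finset.Iic i, Submodule.span F
                      (Set.range (fun b => ((ω a).1 b : Fin n → F)))))).card : ℝ)
          / (Fintype.card ((i : Fin t) →
              ((Fin (ma i) → ↥(Pu i)) × (Fin (mb i) → ↥(Pv i)))) : ℝ) := by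
  refine ⟨2, ?_⟩
  intro q hq F _ _ hF Pu Pv hPu hPv hcross
  have ht0 : 0 < t := ht
  have hq1 : 1 < q := hq.one_lt
  have hqR : (0 : ℝ) < q := by exact_mod_cast lt_trans zero_lt_one hq1
  set i0 : Fin t := ⟨0, ht0⟩ with hi0
  set b0 : Fin (ma (i0 : ℕ)) := ⟨0, hma0⟩ with hb0
  set c0 : Fin (mb (i0 : ℕ)) := ⟨0, hmb0⟩ with hc0
  have hT : t - 1 < t := Nat.sub_lt ht0 zero_lt_one
  have hPu' : ∀ a : Fin t, Pu (a : ℕ) ≤ Pu (t - 1) :=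
    fun a => stmt8_chain_mono Pu hPu a (t - 1) (Nat.le_sub_one_of_lt a.isLt) hT
  have hPv' : ∀ a : Fin t, Pv (a : ℕ) ≤ Pv (t - 1) :=
    fun a => stmt8_chain_mono Pv hPv a (t - 1) (Nat.le_sub_one_of_lt a.isLt) hT
  -- the good event
  set PA : ((i : Fin t) → ((Fin (ma i) → ↥(Pu i)) × (Fin (mb i) → ↥(Pv i)))) → Prop := fun ω => ((ω i0).1 b0 : (Fin n → F)) ∈ Pv (t - 1) with hPA
  set PB : ((i : Fin t) → ((Fin (ma i) → ↥(Pu i)) × (Fin (mb i) → ↥(Pv i)))) → Prop := fun ω => ((ω i0).2 c0 : (Fin n → F)) ∈ Pu (t - 1) with hPB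
  have main : ∀ ω : ((i : Fin t) → ((Fin (ma i) → ↥(Pu i)) × (Fin (mb i) → ↥(Pv i)))), ¬ PA ω → ¬ PB ω →
      ∀ i j : Fin t,
        ¬ (∑ a ∈ Finset.Iic i, Submodule.span F
              (Set.range (fun b => ((ω a).1 b : (Fin n → F)))) ≤
            ∑ a ∈ Finset.Iic j, Submodule.span F
              (Set.range (fun b => ((ω a).2 b : (Fin n → F))))) ∧
        ¬ (∑ a ∈ Finset.Iic j, Submodule.span F
              (Set.range (fun b => ((ω a).2 b : (Fin n → F)))) ≤
            ∑ a ∈ Finset.Iic i, Submodule.span F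
              (Set.range (fun b => ((ω a).1 b : (Fin n → F))))) := by
    intro ω hA hB i j
    have hi0i : i0 ∈ Finset.Iic i := Finset.mem_Iic.2 (Fin.mk_le_of_le_val (Nat.zero_le _))
    have hi0j : i0 ∈ Finset.Iic j := Finset.mem_Iic.2 (Fin.mk_le_of_le_val (Nat.zero_le _))
    constructor
    · intro hle
      apply hA
      have hx : ((ω i0).1 b0 : (Fin n → F)) ∈ Submodule.span F (Set.range fun b => ((ω i0).1 b : (Fin n → F))) :=
        Submodule.subset_span ⟨b0, rfl⟩
      have hx2 : ((ω i0).1 b0 : (Fin n → F)) ∈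
          ∑ a ∈ Finset.Iic i, Submodule.span F (Set.range fun b => ((ω a).1 b : (Fin n → F))) :=
        Finset.single_le_sum (f := fun a => Submodule.span F (Set.range fun b => ((ω a).1 b : (Fin n → F))))
          (fun a _ => zero_le) hi0i hx
      refine stmt8_sum_le _ _ (Pv (t - 1)) ?_ (hle hx2)
      intro a _
      refine le_trans (Submodule.span_le.2 ?_) (hPv' a)
      rintro _ ⟨b, rfl⟩
      exact ((ω a).2 b).2
    · intro hle
      apply hB
      have hx : ((ω i0).2 c0 : (Fin n → F)) ∈ Submodule.span F (Set.range fun b => ((ω i0).2 b : (Fin n → F))) :=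
        Submodule.subset_span ⟨c0, rfl⟩
      have hx2 : ((ω i0).2 c0 : (Fin n → F)) ∈
          ∑ a ∈ Finset.Iic j, Submodule.span F (Set.range fun b => ((ω a).2 b : (Fin n → F))) :=
        Finset.single_le_sum (f := fun a => Submodule.span F (Set.range fun b => ((ω a).2 b : (Fin n → F))))
          (fun a _ => zero_le) hi0j hx
      refine stmt8_sum_le _ _ (Pu (t - 1)) ?_ (hle hx2)
      intro a _
      refine le_trans (Submodule.span_le.2 ?_) (hPu' a)
      rintro _ ⟨b, rfl⟩
      exact ((ω a).1 b).2
  -- counting for event A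
  have hNonempty : Nonempty ((i : Fin t) → ((Fin (ma i) → ↥(Pu i)) × (Fin (mb i) → ↥(Pv i)))) := ⟨fun i => ⟨fun _ => 0, fun _ => 0⟩⟩
  have hN0 : 0 < Fintype.card ((i : Fin t) → ((Fin (ma i) → ↥(Pu i)) × (Fin (mb i) → ↥(Pv i)))) := Fintype.card_pos
  have keyA : (Finset.univ.filter PA).card * q ≤ Fintype.card ((i : Fin t) → ((Fin (ma i) → ↥(Pu i)) × (Fin (mb i) → ↥(Pv i)))) := by
    have hcnt := stmt8_count_aux (Ω := ((i : Fin t) → ((Fin (ma i) → ↥(Pu i)) × (Fin (mb i) → ↥(Pv i))))) (X := ↥(Pu (i0 : ℕ)))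
      (fun ω => (ω i0).1 b0)
      (fun ω x => Function.update ω i0 (Function.update (ω i0).1 b0 x, (ω i0).2))
      (by intro ω x; simp)
      (by intro ω; simp)
      (by intro ω x y; simp [Function.update_idem])
      (fun x => (x : (Fin n → F)) ∈ Pv (t - 1))
    have hs : Pu (i0 : ℕ) ⊓ Pv (t - 1) < Pu (i0 : ℕ) := by
      refine lt_of_le_of_ne inf_le_left (fun hcontra => ?_)
      exact (hcross (i0 : ℕ) (t - 1) i0.isLt hT).1 (hcontra ▸ inf_le_right)
    have hcard1 : (Finset.univ.filter (fun x : ↥(Pu (i0 : ℕ)) => (x : (Fin n → F)) ∈ Pv (t - 1))).card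
        = Fintype.card ↥(Pu (i0 : ℕ) ⊓ Pv (t - 1)) := by
      rw [← Fintype.card_subtype]
      exact Fintype.card_congr
        { toFun := fun x => ⟨x.1.1, Submodule.mem_inf.2 ⟨x.1.2, x.2⟩⟩
          invFun := fun y => ⟨⟨y.1, (Submodule.mem_inf.1 y.2).1⟩, (Submodule.mem_inf.1 y.2).2⟩
          left_inv := fun x => rfl
          right_inv := fun y => rfl }
    have hsmall : (Finset.univ.filter (fun x : ↥(Pu (i0 : ℕ)) => (x : (Fin n → F)) ∈ Pv (t - 1))).card * q
        ≤ Fintype.card ↥(Pu (i0 : ℕ)) := by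
      rw [hcard1, mul_comm, ← hF]
      exact stmt8_card_le hs
    have hMA : 0 < Fintype.card ↥(Pu (i0 : ℕ)) := Fintype.card_pos
    have step : (Finset.univ.filter PA).card * q * Fintype.card ↥(Pu (i0 : ℕ))
        ≤ Fintype.card ((i : Fin t) → ((Fin (ma i) → ↥(Pu i)) × (Fin (mb i) → ↥(Pv i)))) * Fintype.card ↥(Pu (i0 : ℕ)) := by
      calc (Finset.univ.filter PA).card * q * Fintype.card ↥(Pu (i0 : ℕ))
          = (Finset.univ.filter PA).card * Fintype.card ↥(Pu (i0 : ℕ)) * q := by ring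
        _ = (Finset.univ.filter (fun x : ↥(Pu (i0 : ℕ)) => (x : (Fin n → F)) ∈ Pv (t - 1))).card
              * Fintype.card ((i : Fin t) → ((Fin (ma i) → ↥(Pu i)) × (Fin (mb i) → ↥(Pv i)))) * q := by rw [hcnt]
        _ = (Finset.univ.filter (fun x : ↥(Pu (i0 : ℕ)) => (x : (Fin n → F)) ∈ Pv (t - 1))).card * q
              * Fintype.card ((i : Fin t) → ((Fin (ma i) → ↥(Pu i)) × (Fin (mb i) → ↥(Pv i)))) := by ring
        _ ≤ Fintype.card ↥(Pu (i0 : ℕ)) * Fintype.card ((i : Fin t) → ((Fin (ma i) → ↥(Pu i)) × (Fin (mb i) → ↥(Pv i)))) :=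
            Nat.mul_le_mul_right _ hsmall
        _ = Fintype.card ((i : Fin t) → ((Fin (ma i) → ↥(Pu i)) × (Fin (mb i) → ↥(Pv i)))) * Fintype.card ↥(Pu (i0 : ℕ)) := by ring
    exact Nat.le_of_mul_le_mul_right step hMA
  have keyB : (Finset.univ.filter PB).card * q ≤ Fintype.card ((i : Fin t) → ((Fin (ma i) → ↥(Pu i)) × (Fin (mb i) → ↥(Pv i)))) := by
    have hcnt := stmt8_count_aux (Ω := ((i : Fin t) → ((Fin (ma i) → ↥(Pu i)) × (Fin (mb i) → ↥(Pv i))))) (X := ↥(Pv (i0 : ℕ)))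
      (fun ω => (ω i0).2 c0)
      (fun ω x => Function.update ω i0 ((ω i0).1, Function.update (ω i0).2 c0 x))
      (by intro ω x; simp)
      (by intro ω; simp)
      (by intro ω x y; simp [Function.update_idem])
      (fun x => (x : (Fin n → F)) ∈ Pu (t - 1))
    have hs : Pv (i0 : ℕ) ⊓ Pu (t - 1) < Pv (i0 : ℕ) := by
      refine lt_of_le_of_ne inf_le_left (fun hcontra => ?_)
      exact (hcross (t - 1) (i0 : ℕ) hT i0.isLt).2 (hcontra ▸ inf_le_right)
    have hcard1 : (Finset.univ.filter (fun x : ↥(Pv (i0 : ℕ)) => (x : (Fin n → F)) ∈ Pu (t - 1))).card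
        = Fintype.card ↥(Pv (i0 : ℕ) ⊓ Pu (t - 1)) := by
      rw [← Fintype.card_subtype]
      exact Fintype.card_congr
        { toFun := fun x => ⟨x.1.1, Submodule.mem_inf.2 ⟨x.1.2, x.2⟩⟩
          invFun := fun y => ⟨⟨y.1, (Submodule.mem_inf.1 y.2).1⟩, (Submodule.mem_inf.1 y.2).2⟩
          left_inv := fun x => rfl
          right_inv := fun y => rfl }
    have hsmall : (Finset.univ.filter (fun x : ↥(Pv (i0 : ℕ)) => (x : (Fin n → F)) ∈ Pu (t - 1))).card * q
        ≤ Fintype.card ↥(Pv (i0 : ℕ)) := by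
      rw [hcard1, mul_comm, ← hF]
      exact stmt8_card_le hs
    have hMA : 0 < Fintype.card ↥(Pv (i0 : ℕ)) := Fintype.card_pos
    have step : (Finset.univ.filter PB).card * q * Fintype.card ↥(Pv (i0 : ℕ))
        ≤ Fintype.card ((i : Fin t) → ((Fin (ma i) → ↥(Pu i)) × (Fin (mb i) → ↥(Pv i)))) * Fintype.card ↥(Pv (i0 : ℕ)) := by
      calc (Finset.univ.filter PB).card * q * Fintype.card ↥(Pv (i0 : ℕ))
          = (Finset.univ.filter PB).card * Fintype.card ↥(Pv (i0 : ℕ)) * q := by ring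
        _ = (Finset.univ.filter (fun x : ↥(Pv (i0 : ℕ)) => (x : (Fin n → F)) ∈ Pu (t - 1))).card
              * Fintype.card ((i : Fin t) → ((Fin (ma i) → ↥(Pu i)) × (Fin (mb i) → ↥(Pv i)))) * q := by rw [hcnt]
        _ = (Finset.univ.filter (fun x : ↥(Pv (i0 : ℕ)) => (x : (Fin n → F)) ∈ Pu (t - 1))).card * q
              * Fintype.card ((i : Fin t) → ((Fin (ma i) → ↥(Pu i)) × (Fin (mb i) → ↥(Pv i)))) := by ring
        _ ≤ Fintype.card ↥(Pv (i0 : ℕ)) * Fintype.card ((i : Fin t) → ((Fin (ma i) → ↥(Pu i)) × (Fin (mb i) → ↥(Pv i)))) :=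
            Nat.mul_le_mul_right _ hsmall
        _ = Fintype.card ((i : Fin t) → ((Fin (ma i) → ↥(Pu i)) × (Fin (mb i) → ↥(Pv i)))) * Fintype.card ↥(Pv (i0 : ℕ)) := by ring
    exact Nat.le_of_mul_le_mul_right step hMA
  -- event algebra
  set Good : Finset ((i : Fin t) → ((Fin (ma i) → ↥(Pu i)) × (Fin (mb i) → ↥(Pv i)))) := Finset.univ.filter (fun ω => ¬ PA ω ∧ ¬ PB ω) with hGood
  set Target : Finset ((i : Fin t) → ((Fin (ma i) → ↥(Pu i)) × (Fin (mb i) → ↥(Pv i)))) := Finset.univ.filter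
      (fun ω : ((i : Fin t) → ((Fin (ma i) → ↥(Pu i)) × (Fin (mb i) → ↥(Pv i)))) =>
        ∀ i j : Fin t,
          ¬ (∑ a ∈ Finset.Iic i, Submodule.span F
                (Set.range (fun b => ((ω a).1 b : (Fin n → F)))) ≤
              ∑ a ∈ Finset.Iic j, Submodule.span F
                (Set.range (fun b => ((ω a).2 b : (Fin n → F))))) ∧
          ¬ (∑ a ∈ Finset.Iic j, Submodule.span F
                (Set.range (fun b => ((ω a).2 b : (Fin n → F)))) ≤
              ∑ a ∈ Finset.Iic i, Submodule.span F
                (Set.range (fun b => ((ω a).1 b : (Fin n → F)))))) with hTarget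
  have hsubset : Good ⊆ Target := by
    intro ω hω
    rw [hGood, Finset.mem_filter] at hω
    rw [hTarget, Finset.mem_filter]
    exact ⟨Finset.mem_univ _, main ω hω.2.1 hω.2.2⟩
  have hor : (Finset.univ.filter (fun ω => PA ω ∨ PB ω)).card
      ≤ (Finset.univ.filter PA).card + (Finset.univ.filter PB).card := by
    rw [Finset.filter_or]
    exact Finset.card_union_le _ _
  have hsplit : (Finset.univ.filter (fun ω => PA ω ∨ PB ω)).card + Good.card
      = Fintype.card ((i : Fin t) → ((Fin (ma i) → ↥(Pu i)) × (Fin (mb i) → ↥(Pv i)))) := by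
    have hGe : Good = Finset.univ.filter
        (fun ω : ((i : Fin t) → ((Fin (ma i) → ↥(Pu i)) × (Fin (mb i) → ↥(Pv i)))) =>
          ¬ (PA ω ∨ PB ω)) := by
      rw [hGood]; ext ω; simp [not_or]
    rw [hGe, Finset.card_filter_add_card_filter_not
      (p := fun ω : ((i : Fin t) → ((Fin (ma i) → ↥(Pu i)) × (Fin (mb i) → ↥(Pv i)))) => PA ω ∨ PB ω)]
    exact Finset.card_univ
  -- real arithmetic
  rw [le_div_iff₀ (by exact_mod_cast hN0)]
  have hA' : ((Finset.univ.filter PA).card : ℝ) ≤ (Fintype.card ((i : Fin t) → ((Fin (ma i) → ↥(Pu i)) × (Fin (mb i) → ↥(Pv i)))) : ℝ) / q := by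
    rw [le_div_iff₀ hqR]
    exact_mod_cast keyA
  have hB' : ((Finset.univ.filter PB).card : ℝ) ≤ (Fintype.card ((i : Fin t) → ((Fin (ma i) → ↥(Pu i)) × (Fin (mb i) → ↥(Pv i)))) : ℝ) / q := by
    rw [le_div_iff₀ hqR]
    exact_mod_cast keyB
  have hTG : (Good.card : ℝ) ≤ (Target.card : ℝ) := by
    exact_mod_cast Finset.card_le_card hsubset
  have hor' : ((Finset.univ.filter (fun ω => PA ω ∨ PB ω)).card : ℝ)
      ≤ ((Finset.univ.filter PA).card : ℝ) + ((Finset.univ.filter PB).card : ℝ) := by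
    exact_mod_cast hor
  have hsplit' : ((Finset.univ.filter (fun ω => PA ω ∨ PB ω)).card : ℝ) + (Good.card : ℝ)
      = (Fintype.card ((i : Fin t) → ((Fin (ma i) → ↥(Pu i)) × (Fin (mb i) → ↥(Pv i)))) : ℝ) := by exact_mod_cast hsplit
  have hring : (1 - 2 / (q : ℝ)) * (Fintype.card ((i : Fin t) → ((Fin (ma i) → ↥(Pu i)) × (Fin (mb i) → ↥(Pv i)))) : ℝ)
      = (Fintype.card ((i : Fin t) → ((Fin (ma i) → ↥(Pu i)) × (Fin (mb i) → ↥(Pv i)))) : ℝ) - (Fintype.card ((i : Fin t) → ((Fin (ma i) → ↥(Pu i)) × (Fin (mb i) → ↥(Pv i)))) : ℝ) / q - (Fintype.card ((i : Fin t) → ((Fin (ma i) → ↥(Pu i)) × (Fin (mb i) → ↥(Pv i)))) : ℝ) / q := by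
    field_simp; ring
  linarith
end

section
/- (Key claim in the proof of Lemma 5.) Fix t ≥ 1, n ≥ 1, dimensions d_0 < d_1 < ⋯ < d_{t−1} ≤ n, and integers k_v(1), …, k_v(t) with 1 ≤ k_v(1) ≤ d_0 and k_v(j) ≤ d_{j−1} − d_{j−2} for j = 2, …, t. There exists a constant C, depending only on these fixed parameters, such that for every prime power q and every chain of subspaces Π(0) ⊂ ⋯ ⊂ Π(t−1) of F_q^n with dim(Π(j)) = d_j, the following holds. For j = 1, …, t let π_v(j) be the span of k_v(j) vectors chosen independently and uniformly at random from Π(j−1), and set Π_v(i) = π_v(1) + ⋯ + π_v(i). Then with probability at least 1 − C/q: Π(0) ∩ Π_v(k) = π_v(1) for every k ∈ {1, …, t}. -/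
open scoped Classical

lemma coord_count_le {ι : Type} [Fintype ι] [DecidableEq ι] (A : ι → Type) [∀ i, Fintype (A i)]
    (p : (∀ i, A i) → Prop) (j : ι) (N : ℕ)
    (h : ∀ ω : ∀ i, A i,
      (Finset.univ.filter (fun a : A j => p (Function.update ω j a))).card ≤ N) :
    (Finset.univ.filter p).card * Fintype.card (A j) ≤ N * Fintype.card (∀ i, A i) := by
  have key : (Finset.univ.filter p).card ≤ N * Fintype.card (∀ i : {i // i ≠ j}, A i) := by
    have hmain := Finset.card_le_mul_card_image_of_maps_to
      (f := fun (ω : ∀ i, A i) (i : {i // i ≠ j}) => ω i)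
      (s := Finset.univ.filter p) (t := Finset.univ)
      (fun a _ => Finset.mem_univ _) N ?_
    · simpa [Finset.card_univ] using hmain
    · intro b _
      rcases Finset.eq_empty_or_nonempty
        ((Finset.univ.filter p).filter (fun ω => (fun i : {i // i ≠ j} => ω i) = b)) with he | hne
      · simp [he]
      · obtain ⟨ω₀, hω₀⟩ := hne
        refine le_trans (Finset.card_le_card_of_injOn (fun ω => ω j) ?_ ?_) (h ω₀)
        · intro ω hω
          simp only [Finset.mem_coe, Finset.mem_filter, Finset.mem_univ, true_and] at hω hω₀ ⊢
          have hupd : Function.update ω₀ j (ω j) = ω := by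
            funext i
            by_cases hi : i = j
            · subst hi; simp
            · rw [Function.update_of_ne hi]
              exact congrFun (hω₀.2.trans hω.2.symm) ⟨i, hi⟩
          rw [hupd]; exact hω.1
        · intro ω hω ω' hω' hjj
          simp only [Finset.coe_filter, Set.mem_setOf_eq] at hω hω'
          funext i
          by_cases hi : i = j
          · subst hi; exact hjj
          · exact congrFun (hω.2.trans hω'.2.symm) ⟨i, hi⟩
  have hcard : Fintype.card (∀ i, A i)
      = Fintype.card (A j) * Fintype.card (∀ i : {i // i ≠ j}, A i) := by
    rw [Fintype.card_congr (Equiv.piSplitAt j A), Fintype.card_prod]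
  calc (Finset.univ.filter p).card * Fintype.card (A j)
      ≤ (N * Fintype.card (∀ i : {i // i ≠ j}, A i)) * Fintype.card (A j) :=
        Nat.mul_le_mul_right _ key
    _ = N * Fintype.card (∀ i, A i) := by rw [hcard]; ring

lemma card_filter_irrel {α : Type} (p : α → Prop) {h1 : DecidablePred p}
    [h2 : DecidablePred p] (s : Finset α) :
    (@Finset.filter α p h1 s).card = (@Finset.filter α p h2 s).card := by
  congr 1
  rw [Finset.filter_congr_decidable]

lemma filter_mem_card {F : Type} [Field F] [Fintype F] {V : Type} [AddCommGroup V] [Module F V]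
    [Fintype V] (S M : Submodule F V) (h : M ≤ S) :
    (Finset.univ.filter (fun a : ↥S => (a : V) ∈ M)).card
      = Fintype.card F ^ Module.finrank F ↥M := by
  rw [← Fintype.card_subtype]
  have e : {a : ↥S // (a : V) ∈ M} ≃ ↥M :=
    ⟨fun x => ⟨x.1.1, x.2⟩, fun y => ⟨⟨y.1, h y.2⟩, y.2⟩, fun _ => rfl, fun _ => rfl⟩
  rw [Fintype.card_congr e, Module.card_eq_pow_finrank (K := F)]

/-- key claim in the proof of Lemma 5. Subspaces and samples are 0-indexed:
`P j` is the paper's `Π(j)` (for `j < t`), the sample at index `j` (drawn from `P j`) is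
the paper's `π_v(j+1)`, and `kv j` is the paper's `k_v(j+1)`. For fixed parameters there
is a constant `C` such that for every prime power `q` and every chain
`P 0 ⊂ ⋯ ⊂ P (t−1)` of subspaces of `F_q^n` with `dim (P j) = d j`, if `π_v(j)` is the
span of `kv j` uniformly random vectors of `P j` (all independent) and
`Π_v(i) = π_v(0) + ⋯ + π_v(i)`, then with probability at least `1 − C/q`:
`P 0 ⊓ Π_v(k) = π_v(0)` for every `k < t`. -/
theorem stmt_9 (t n : ℕ) (ht : 0 < t) (hn : 1 ≤ n)
    (d kv : ℕ → ℕ)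
    (hdmono : ∀ j, j + 1 < t → d j < d (j + 1))
    (hdn : ∀ j, j < t → d j ≤ n)
    (hkv0 : 1 ≤ kv 0) (hkv0' : kv 0 ≤ d 0)
    (hkv : ∀ j, 1 ≤ j → j < t → kv j ≤ d j - d (j - 1)) :
    ∃ C : ℝ, ∀ (q : ℕ), IsPrimePow q →
      ∀ (F : Type) [Field F] [Fintype F], Fintype.card F = q →
      ∀ (P : ℕ → Submodule F (Fin n → F)),
        (∀ j, j + 1 < t → P j < P (j + 1)) →
        (∀ j, j < t → Module.finrank F ↥(P j) = d j) →
      1 - C / q ≤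
        ((Finset.univ.filter
            (fun ω : (j : Fin t) → (Fin (kv j) → ↥(P j)) =>
              ∀ k : Fin t,
                P 0 ⊓ (∑ a ∈ Finset.Iic k, Submodule.span F
                    (Set.range (fun b => (ω a b : Fin n → F))))
                  = Submodule.span F
                      (Set.range (fun b => (ω (⟨0, ht⟩ : Fin t) b : Fin n → F))))).card : ℝ)
          / (Fintype.card ((j : Fin t) → (Fin (kv j) → ↥(P j))) : ℝ) := by
  refine ⟨∑ j ∈ Finset.range t, (kv j : ℝ), ?_⟩
  intro q hq F _ _ hF P hPlt hPd
  have hq1 : 1 < q := hq.one_lt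
  -- monotonicity of the chain
  have hmono : ∀ b, b < t → ∀ a, a ≤ b → P a ≤ P b := by
    intro b
    induction b with
    | zero => intro _ a ha; rw [Nat.le_zero.mp ha]
    | succ b ih =>
      intro hb a ha
      by_cases hab : a = b + 1
      · rw [hab]
      · exact le_trans (ih (by omega) a (by omega)) (hPlt b (by omega)).le
  have hdmono' : ∀ b, b < t → ∀ a, a ≤ b → d a ≤ d b := by
    intro b
    induction b with
    | zero => intro _ a ha; rw [Nat.le_zero.mp ha]
    | succ b ih =>
      intro hb a ha
      by_cases hab : a = b + 1
      · rw [hab]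
      · exact le_trans (ih (by omega) a (by omega)) (hdmono b (by omega)).le
  have hd1 : ∀ j, j < t → 1 ≤ d j :=
    fun j hj => le_trans (le_trans hkv0 hkv0') (hdmono' j hj 0 (Nat.zero_le _))
  -- the auxiliary submodules
  set Q : Fin t → Submodule F (Fin n → F) :=
    fun j => if (j : ℕ) = 0 then ⊥ else P ((j : ℕ) - 1) with hQdef
  set M : (j : Fin t) → (Fin (kv j) → ↥(P j)) → Fin (kv j) → Submodule F (Fin n → F) :=
    fun j w i => Q j ⊔ Submodule.span F
      (Set.range (fun i' : {i' : Fin (kv j) // i' ≠ i} => ((w i' : Fin n → F)))) with hMdef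
  have hQle : ∀ j : Fin t, Q j ≤ P j := by
    intro j
    by_cases h0 : (j : ℕ) = 0
    · simp [hQdef, h0]
    · simp only [hQdef, h0, if_false]
      exact hmono j j.2 ((j : ℕ) - 1) (Nat.sub_le _ _)
  have hQrank : ∀ j : Fin t, Module.finrank F ↥(Q j) + kv j ≤ d j := by
    intro j
    by_cases h0 : (j : ℕ) = 0
    · have hQ0 : Q j = ⊥ := by simp [hQdef, h0]
      rw [hQ0, finrank_bot, h0]
      simpa using hkv0'
    · have hQ0 : Q j = P ((j : ℕ) - 1) := by simp [hQdef, h0]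
      rw [hQ0, hPd _ (by omega : (j : ℕ) - 1 < t)]
      have h1 := hkv j (by omega) j.2
      have h2 := hdmono ((j : ℕ) - 1) (by omega)
      rw [(by omega : (j : ℕ) - 1 + 1 = (j : ℕ))] at h2
      omega
  have hMle : ∀ (j : Fin t) (w : Fin (kv j) → ↥(P j)) (i), M j w i ≤ P j := by
    intro j w i
    refine sup_le (hQle j) ?_
    rw [Submodule.span_le]
    rintro x ⟨i', rfl⟩
    exact (w i').2
  have hMrank : ∀ (j : Fin t) (w : Fin (kv j) → ↥(P j)) (i),
      Module.finrank F ↥(M j w i) ≤ d j - 1 := by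
    intro j w i
    have h1 : Module.finrank F ↥(M j w i)
        ≤ Module.finrank F ↥(Q j) + Module.finrank F
          ↥(Submodule.span F
            (Set.range (fun i' : {i' : Fin (kv j) // i' ≠ i} => ((w i' : Fin n → F))))) :=
      Submodule.finrank_add_le_finrank_add_finrank _ _
    have h2 : Module.finrank F
        ↥(Submodule.span F
          (Set.range (fun i' : {i' : Fin (kv j) // i' ≠ i} => ((w i' : Fin n → F)))))
        ≤ kv j - 1 := by
      refine le_trans (finrank_span_le_card _) ?_
      rw [Set.toFinset_card]
      refine le_trans (Fintype.card_range_le _) ?_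
      rw [Fintype.card_subtype_compl, Fintype.card_subtype_eq, Fintype.card_fin]
    have h3 := hQrank j
    have h4 : 1 ≤ kv j := i.pos
    omega
  -- counting, per coordinate within a batch
  have hcardP : ∀ j : Fin t, Fintype.card ↥(P j) = q ^ d j := by
    intro j
    rw [Module.card_eq_pow_finrank (K := F), hF, hPd _ j.2]
  have h3 : ∀ (j : Fin t) (i : Fin (kv j)),
      q * (Finset.univ.filter
        (fun w : Fin (kv j) → ↥(P j) => (w i : Fin n → F) ∈ M j w i)).card
      ≤ Fintype.card (Fin (kv j) → ↥(P j)) := by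
    intro j i
    have hcc := coord_count_le (fun _ : Fin (kv j) => ↥(P j))
      (fun w => (w i : Fin n → F) ∈ M j w i) i (q ^ (d j - 1)) ?_
    · -- multiply by q and cancel
      have hPpos : 0 < Fintype.card ↥(P j) := Fintype.card_pos
      have : (q * (Finset.univ.filter
          (fun w : Fin (kv j) → ↥(P j) => (w i : Fin n → F) ∈ M j w i)).card)
          * Fintype.card ↥(P j)
          ≤ Fintype.card (Fin (kv j) → ↥(P j)) * Fintype.card ↥(P j) := by
        calc (q * (Finset.univ.filter
              (fun w : Fin (kv j) → ↥(P j) => (w i : Fin n → F) ∈ M j w i)).card)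
              * Fintype.card ↥(P j)
            = q * ((Finset.univ.filter
              (fun w : Fin (kv j) → ↥(P j) => (w i : Fin n → F) ∈ M j w i)).card
              * Fintype.card ↥(P j)) := by ring
          _ ≤ q * (q ^ (d j - 1) * Fintype.card (Fin (kv j) → ↥(P j))) :=
              Nat.mul_le_mul_left _ hcc
          _ = (q * q ^ (d j - 1)) * Fintype.card (Fin (kv j) → ↥(P j)) := by ring
          _ = Fintype.card (Fin (kv j) → ↥(P j)) * Fintype.card ↥(P j) := by
              have hqq : q * q ^ (d (j : ℕ) - 1) = q ^ d (j : ℕ) := by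
                obtain ⟨e, he⟩ : ∃ e, d (j : ℕ) = e + 1 :=
                  ⟨d (j : ℕ) - 1, (Nat.sub_add_cancel (hd1 j.1 j.2)).symm⟩
                rw [he, Nat.add_sub_cancel, pow_succ]
                ring
              rw [hqq, hcardP j]; ring
      exact Nat.le_of_mul_le_mul_right this hPpos
    · intro w
      have hfe : (Finset.univ.filter
          (fun a : ↥(P j) => ((Function.update w i a i : ↥(P j)) : Fin n → F)
            ∈ M j (Function.update w i a) i))
          = (Finset.univ.filter (fun a : ↥(P j) => (a : Fin n → F) ∈ M j w i)) := by
        apply Finset.filter_congr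
        intro a _
        have hfun : (fun i' : {i' : Fin (kv (j : ℕ)) // i' ≠ i} =>
              ((Function.update w i a i' : ↥(P (j : ℕ))) : Fin n → F))
            = fun i' : {i' : Fin (kv (j : ℕ)) // i' ≠ i} => ((w i' : ↥(P (j : ℕ))) : Fin n → F) := by
          funext i'
          rw [Function.update_of_ne i'.2]
        have hMa : M j (Function.update w i a) i = M j w i := by
          simp only [hMdef, hfun]
        rw [Function.update_self, hMa]
      rw [hfe, filter_mem_card _ _ (hMle j w i)]
      rw [hF]
      exact Nat.pow_le_pow_right (by omega) (hMrank j w i)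
  -- counting: the whole batch j
  have h2 : ∀ j : Fin t,
      q * (Finset.univ.filter
        (fun w : Fin (kv j) → ↥(P j) => ∃ i, (w i : Fin n → F) ∈ M j w i)).card
      ≤ kv j * Fintype.card (Fin (kv j) → ↥(P j)) := by
    intro j
    have hsub : (Finset.univ.filter
        (fun w : Fin (kv j) → ↥(P j) => ∃ i, (w i : Fin n → F) ∈ M j w i))
        ⊆ Finset.univ.biUnion (fun i : Fin (kv j) =>
          Finset.univ.filter (fun w : Fin (kv j) → ↥(P j) => (w i : Fin n → F) ∈ M j w i)) := by
      intro w hw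
      simp only [Finset.mem_filter, Finset.mem_univ, true_and] at hw
      obtain ⟨i, hi⟩ := hw
      exact Finset.mem_biUnion.mpr ⟨i, Finset.mem_univ _, by simp [hi]⟩
    calc q * (Finset.univ.filter
          (fun w : Fin (kv j) → ↥(P j) => ∃ i, (w i : Fin n → F) ∈ M j w i)).card
        ≤ q * ∑ i : Fin (kv j), (Finset.univ.filter
            (fun w : Fin (kv j) → ↥(P j) => (w i : Fin n → F) ∈ M j w i)).card :=
          Nat.mul_le_mul_left _ (le_trans (Finset.card_le_card hsub) (Finset.card_biUnion_le))
      _ = ∑ i : Fin (kv j), q * (Finset.univ.filter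
            (fun w : Fin (kv j) → ↥(P j) => (w i : Fin n → F) ∈ M j w i)).card := by
          rw [Finset.mul_sum]
      _ ≤ ∑ _i : Fin (kv j), Fintype.card (Fin (kv j) → ↥(P j)) :=
          Finset.sum_le_sum (fun i _ => h3 j i)
      _ = kv j * Fintype.card (Fin (kv j) → ↥(P j)) := by
          rw [Finset.sum_const, Finset.card_univ, Fintype.card_fin, smul_eq_mul]
  -- counting: the whole sample space, batch j
  have h1 : ∀ j : Fin t,
      q * (Finset.univ.filter
        (fun ω : (j' : Fin t) → (Fin (kv j') → ↥(P j')) =>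
          ∃ i, (ω j i : Fin n → F) ∈ M j (ω j) i)).card
      ≤ kv j * Fintype.card ((j' : Fin t) → (Fin (kv j') → ↥(P j'))) := by
    intro j
    have hcc := coord_count_le (fun j' : Fin t => Fin (kv j') → ↥(P j'))
      (fun ω => ∃ i, (ω j i : Fin n → F) ∈ M j (ω j) i) j
      ((Finset.univ.filter
        (fun w : Fin (kv j) → ↥(P j) => ∃ i, (w i : Fin n → F) ∈ M j w i)).card) ?_
    · rw [card_filter_irrel
        (fun ω : (j' : Fin t) → (Fin (kv j') → ↥(P j')) =>
          ∃ i, (ω j i : Fin n → F) ∈ M j (ω j) i)] at hcc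
      have hBpos : 0 < Fintype.card (Fin (kv j) → ↥(P j)) := Fintype.card_pos
      refine Nat.le_of_mul_le_mul_right ?_ hBpos
      calc (q * (Finset.univ.filter
            (fun ω : (j' : Fin t) → (Fin (kv j') → ↥(P j')) =>
              ∃ i, (ω j i : Fin n → F) ∈ M j (ω j) i)).card)
            * Fintype.card (Fin (kv j) → ↥(P j))
          = q * ((Finset.univ.filter
            (fun ω : (j' : Fin t) → (Fin (kv j') → ↥(P j')) =>
              ∃ i, (ω j i : Fin n → F) ∈ M j (ω j) i)).card
            * Fintype.card (Fin (kv j) → ↥(P j))) := by ring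
        _ ≤ q * ((Finset.univ.filter
            (fun w : Fin (kv j) → ↥(P j) => ∃ i, (w i : Fin n → F) ∈ M j w i)).card
            * Fintype.card ((j' : Fin t) → (Fin (kv j') → ↥(P j')))) :=
            Nat.mul_le_mul_left _ hcc
        _ = (q * (Finset.univ.filter
            (fun w : Fin (kv j) → ↥(P j) => ∃ i, (w i : Fin n → F) ∈ M j w i)).card)
            * Fintype.card ((j' : Fin t) → (Fin (kv j') → ↥(P j'))) := by ring
        _ ≤ (kv j * Fintype.card (Fin (kv j) → ↥(P j)))
            * Fintype.card ((j' : Fin t) → (Fin (kv j') → ↥(P j'))) :=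
            Nat.mul_le_mul_right _ (h2 j)
        _ = (kv j * Fintype.card ((j' : Fin t) → (Fin (kv j') → ↥(P j'))))
            * Fintype.card (Fin (kv j) → ↥(P j)) := by ring
    · intro ω
      rw [card_filter_irrel
        (fun a : Fin (kv j) → ↥(P j) =>
          ∃ i, ((Function.update ω j a j) i : Fin n → F) ∈ M j (Function.update ω j a j) i)]
      have hfe : (Finset.univ.filter
          (fun a : Fin (kv j) → ↥(P j) =>
            ∃ i, ((Function.update ω j a j) i : Fin n → F) ∈ M j (Function.update ω j a j) i))
          = (Finset.univ.filter
            (fun w : Fin (kv j) → ↥(P j) => ∃ i, (w i : Fin n → F) ∈ M j w i)) := by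
        apply Finset.filter_congr
        intro a _
        rw [Function.update_self]
      exact le_of_eq (congrArg Finset.card hfe)
  -- the deterministic implication
  have hdet : ∀ ω : (j' : Fin t) → (Fin (kv j') → ↥(P j')),
      (∀ (j : Fin t) (i : Fin (kv j)), (ω j i : Fin n → F) ∉ M j (ω j) i) →
      ∀ k : Fin t,
        P 0 ⊓ (∑ a ∈ Finset.Iic k, Submodule.span F
            (Set.range (fun b => (ω a b : Fin n → F))))
          = Submodule.span F
              (Set.range (fun b => (ω (⟨0, ht⟩ : Fin t) b : Fin n → F))) := by
    intro ω hω
    have hLI : ∀ (j : Fin t) (c : Fin (kv j) → F),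
        (∑ i, c i • (ω j i : Fin n → F)) ∈ Q j → c = 0 := by
      intro j c hc
      by_contra hc0
      obtain ⟨i₀, hi₀⟩ := Function.ne_iff.mp hc0
      have hi₀' : c i₀ ≠ 0 := by simpa using hi₀
      refine hω j i₀ ?_
      have hsum : c i₀ • (ω j i₀ : Fin n → F)
          = (∑ i, c i • (ω j i : Fin n → F))
            - ∑ i ∈ Finset.univ.erase i₀, c i • (ω j i : Fin n → F) := by
        rw [← Finset.add_sum_erase _ _ (Finset.mem_univ i₀)]
        abel
      have hmem : c i₀ • (ω j i₀ : Fin n → F) ∈ M j (ω j) i₀ := by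
        rw [hsum]
        simp only [hMdef]
        refine Submodule.sub_mem _ (Submodule.mem_sup_left hc) ?_
        refine Submodule.sum_mem _ ?_
        intro i hi
        refine Submodule.smul_mem _ _ ?_
        refine Submodule.mem_sup_right ?_
        exact Submodule.subset_span ⟨⟨i, (Finset.mem_erase.mp hi).1⟩, rfl⟩
      have hfin := (M j (ω j) i₀).smul_mem (c i₀)⁻¹ hmem
      rwa [inv_smul_smul₀ hi₀'] at hfin
    have hspanle : ∀ a : Fin t,
        Submodule.span F (Set.range (fun b => (ω a b : Fin n → F))) ≤ P a := by
      intro a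
      rw [Submodule.span_le]
      rintro x ⟨b, rfl⟩
      exact (ω a b).2
    have hsumle : ∀ (m : ℕ) (hm : m < t) (s : Finset (Fin t)), (∀ a ∈ s, (a : ℕ) ≤ m) →
        (∑ a ∈ s, Submodule.span F (Set.range (fun b => (ω a b : Fin n → F)))) ≤ P m := by
      intro m hm s hs
      refine Finset.sum_induction _ (fun N => N ≤ P m) (fun a b ha hb => ?_) bot_le ?_
      · rw [Submodule.add_eq_sup]; exact sup_le ha hb
      · intro a ha
        exact le_trans (hspanle a) (hmono m hm a (hs a ha))
    intro k
    suffices hkey : ∀ (m : ℕ) (hm : m < t),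
        P 0 ⊓ (∑ a ∈ Finset.Iic (⟨m, hm⟩ : Fin t), Submodule.span F
            (Set.range (fun b => (ω a b : Fin n → F))))
          = Submodule.span F
              (Set.range (fun b => (ω (⟨0, ht⟩ : Fin t) b : Fin n → F))) by
      have hk := hkey k.1 k.2
      simpa using hk
    intro m
    induction m with
    | zero =>
      intro hm
      have hIic : Finset.Iic (⟨0, hm⟩ : Fin t) = {⟨0, hm⟩} := by
        ext a
        simp [Fin.le_def, Fin.ext_iff, Nat.le_zero]
      rw [hIic, Finset.sum_singleton]
      exact inf_eq_right.mpr (hspanle ⟨0, hm⟩)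
    | succ m ih =>
      intro hm
      have hmt : m < t := by omega
      have hIic : Finset.Iic (⟨m + 1, hm⟩ : Fin t)
          = insert (⟨m + 1, hm⟩ : Fin t) (Finset.Iic (⟨m, hmt⟩ : Fin t)) := by
        ext a
        simp only [Finset.mem_Iic, Finset.mem_insert, Fin.le_def, Fin.ext_iff]
        omega
      rw [hIic, Finset.sum_insert (by simp [Finset.mem_Iic, Fin.le_def])]
      refine le_antisymm ?_ ?_
      · intro x hx
        obtain ⟨hx0, hxs⟩ := Submodule.mem_inf.mp hx
        rw [Submodule.add_eq_sup, Submodule.mem_sup] at hxs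
        obtain ⟨y, hy, z, hz, rfl⟩ := hxs
        obtain ⟨c, rfl⟩ := (Submodule.mem_span_range_iff_exists_fun F).mp hy
        have hzPm : z ∈ P m := hsumle m hmt _ (fun a ha => by
          simpa [Fin.le_def] using Finset.mem_Iic.mp ha) hz
        have hyP : (∑ i, c i • (ω ⟨m + 1, hm⟩ i : Fin n → F)) ∈ P m := by
          have hxPm : (∑ i, c i • (ω ⟨m + 1, hm⟩ i : Fin n → F)) + z ∈ P m :=
            hmono m hmt 0 (Nat.zero_le m) hx0
          simpa using Submodule.sub_mem _ hxPm hzPm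
        have hcz : c = 0 := by
          refine hLI ⟨m + 1, hm⟩ c ?_
          have hQeq : Q ⟨m + 1, hm⟩ = P m := by
            simp [hQdef]
          rw [hQeq]; exact hyP
        have hz0 : z ∈ P 0 := by
          simpa [hcz] using hx0
        rw [hcz]
        simp only [Pi.zero_apply, zero_smul, Finset.sum_const_zero, zero_add]
        rw [← ih hmt]
        exact Submodule.mem_inf.mpr ⟨hz0, hz⟩
      · refine le_inf (hspanle ⟨0, ht⟩) ?_
        rw [Submodule.add_eq_sup]
        refine le_sup_of_le_right ?_
        rw [← ih hmt]
        exact inf_le_right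
  -- bound on the bad set
  have hbad : q * (Finset.univ.filter
      (fun ω : (j' : Fin t) → (Fin (kv j') → ↥(P j')) =>
        ∃ (j : Fin t) (i : Fin (kv j)), (ω j i : Fin n → F) ∈ M j (ω j) i)).card
      ≤ (∑ j : Fin t, kv j) * Fintype.card ((j' : Fin t) → (Fin (kv j') → ↥(P j'))) := by
    have hsub : (Finset.univ.filter
        (fun ω : (j' : Fin t) → (Fin (kv j') → ↥(P j')) =>
          ∃ (j : Fin t) (i : Fin (kv j)), (ω j i : Fin n → F) ∈ M j (ω j) i))
        ⊆ Finset.univ.biUnion (fun j : Fin t =>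
          Finset.univ.filter (fun ω : (j' : Fin t) → (Fin (kv j') → ↥(P j')) =>
            ∃ i, (ω j i : Fin n → F) ∈ M j (ω j) i)) := by
      intro ω hω
      simp only [Finset.mem_filter, Finset.mem_univ, true_and] at hω
      obtain ⟨j, i, hi⟩ := hω
      refine Finset.mem_biUnion.mpr ⟨j, Finset.mem_univ _, ?_⟩
      simp only [Finset.mem_filter, Finset.mem_univ, true_and]
      exact ⟨i, hi⟩
    calc q * (Finset.univ.filter
        (fun ω : (j' : Fin t) → (Fin (kv j') → ↥(P j')) =>
          ∃ (j : Fin t) (i : Fin (kv j)), (ω j i : Fin n → F) ∈ M j (ω j) i)).card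
        ≤ q * ∑ j : Fin t, (Finset.univ.filter
            (fun ω : (j' : Fin t) → (Fin (kv j') → ↥(P j')) =>
              ∃ i, (ω j i : Fin n → F) ∈ M j (ω j) i)).card :=
          Nat.mul_le_mul_left _
            (le_trans (Finset.card_le_card hsub) Finset.card_biUnion_le)
      _ = ∑ j : Fin t, q * (Finset.univ.filter
            (fun ω : (j' : Fin t) → (Fin (kv j') → ↥(P j')) =>
              ∃ i, (ω j i : Fin n → F) ∈ M j (ω j) i)).card := by
          rw [Finset.mul_sum]
      _ ≤ ∑ j : Fin t, kv j * Fintype.card ((j' : Fin t) → (Fin (kv j') → ↥(P j'))) :=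
          Finset.sum_le_sum (fun j _ => h1 j)
      _ = (∑ j : Fin t, kv j) * Fintype.card ((j' : Fin t) → (Fin (kv j') → ↥(P j'))) := by
          rw [Finset.sum_mul]
  -- good set is large
  have hgood : Fintype.card ((j' : Fin t) → (Fin (kv j') → ↥(P j')))
      ≤ (Finset.univ.filter
          (fun ω : (j : Fin t) → (Fin (kv j) → ↥(P j)) =>
            ∀ k : Fin t,
              P 0 ⊓ (∑ a ∈ Finset.Iic k, Submodule.span F
                  (Set.range (fun b => (ω a b : Fin n → F))))
                = Submodule.span F
                    (Set.range (fun b => (ω (⟨0, ht⟩ : Fin t) b : Fin n → F))))).card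
        + (Finset.univ.filter
          (fun ω : (j' : Fin t) → (Fin (kv j') → ↥(P j')) =>
            ∃ (j : Fin t) (i : Fin (kv j)), (ω j i : Fin n → F) ∈ M j (ω j) i)).card := by
    have hdisj := Finset.card_filter_add_card_filter_not
      (s := (Finset.univ : Finset ((j' : Fin t) → (Fin (kv j') → ↥(P j')))))
      (p := fun ω : (j' : Fin t) → (Fin (kv j') → ↥(P j')) =>
        ∃ (j : Fin t) (i : Fin (kv j)), (ω j i : Fin n → F) ∈ M j (ω j) i)
    have hsub2 : (Finset.univ.filter
        (fun ω : (j' : Fin t) → (Fin (kv j') → ↥(P j')) =>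
          ¬ ∃ (j : Fin t) (i : Fin (kv j)), (ω j i : Fin n → F) ∈ M j (ω j) i))
        ⊆ (Finset.univ.filter
          (fun ω : (j : Fin t) → (Fin (kv j) → ↥(P j)) =>
            ∀ k : Fin t,
              P 0 ⊓ (∑ a ∈ Finset.Iic k, Submodule.span F
                  (Set.range (fun b => (ω a b : Fin n → F))))
                = Submodule.span F
                    (Set.range (fun b => (ω (⟨0, ht⟩ : Fin t) b : Fin n → F))))) := by
      intro ω hω
      simp only [Finset.mem_filter, Finset.mem_univ, true_and] at hω ⊢
      push_neg at hω
      exact hdet ω hω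
    calc Fintype.card ((j' : Fin t) → (Fin (kv j') → ↥(P j')))
        = (Finset.univ.filter
            (fun ω : (j' : Fin t) → (Fin (kv j') → ↥(P j')) =>
              ∃ (j : Fin t) (i : Fin (kv j)), (ω j i : Fin n → F) ∈ M j (ω j) i)).card
          + (Finset.univ.filter
            (fun ω : (j' : Fin t) → (Fin (kv j') → ↥(P j')) =>
              ¬ ∃ (j : Fin t) (i : Fin (kv j)), (ω j i : Fin n → F) ∈ M j (ω j) i)).card := by
          rw [hdisj, Finset.card_univ]
      _ ≤ (Finset.univ.filter
            (fun ω : (j' : Fin t) → (Fin (kv j') → ↥(P j')) =>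
              ∃ (j : Fin t) (i : Fin (kv j)), (ω j i : Fin n → F) ∈ M j (ω j) i)).card
          + (Finset.univ.filter
            (fun ω : (j : Fin t) → (Fin (kv j) → ↥(P j)) =>
              ∀ k : Fin t,
                P 0 ⊓ (∑ a ∈ Finset.Iic k, Submodule.span F
                    (Set.range (fun b => (ω a b : Fin n → F))))
                  = Submodule.span F
                      (Set.range (fun b => (ω (⟨0, ht⟩ : Fin t) b : Fin n → F))))).card :=
          Nat.add_le_add_left (Finset.card_le_card hsub2) _
      _ = _ := by ring
  -- final computation over the reals
  have hne : Nonempty ((j' : Fin t) → (Fin (kv j') → ↥(P j'))) := ⟨fun _ _ => 0⟩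
  have hΩpos : 0 < Fintype.card ((j' : Fin t) → (Fin (kv j') → ↥(P j'))) := Fintype.card_pos
  have hΩR : (0 : ℝ) < (Fintype.card ((j' : Fin t) → (Fin (kv j') → ↥(P j'))) : ℝ) := by
    exact_mod_cast hΩpos
  have hqR : (0 : ℝ) < (q : ℝ) := by
    exact_mod_cast lt_trans Nat.zero_lt_one hq1
  have hCB : ((Finset.univ.filter
      (fun ω : (j' : Fin t) → (Fin (kv j') → ↥(P j')) =>
        ∃ (j : Fin t) (i : Fin (kv j)), (ω j i : Fin n → F) ∈ M j (ω j) i)).card : ℝ) * q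
      ≤ (∑ j ∈ Finset.range t, (kv j : ℝ))
        * (Fintype.card ((j' : Fin t) → (Fin (kv j') → ↥(P j'))) : ℝ) := by
    have hc : ((∑ j : Fin t, kv j : ℕ) : ℝ) = ∑ j ∈ Finset.range t, (kv j : ℝ) := by
      push_cast
      exact Fin.sum_univ_eq_sum_range (fun i => (kv i : ℝ)) t
    have := hbad
    have hcast : ((q * (Finset.univ.filter
        (fun ω : (j' : Fin t) → (Fin (kv j') → ↥(P j')) =>
          ∃ (j : Fin t) (i : Fin (kv j)), (ω j i : Fin n → F) ∈ M j (ω j) i)).card : ℕ) : ℝ)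
        ≤ (((∑ j : Fin t, kv j)
          * Fintype.card ((j' : Fin t) → (Fin (kv j') → ↥(P j'))) : ℕ) : ℝ) := by
      exact_mod_cast this
    push_cast at hcast
    rw [← hc]
    push_cast
    linarith
  have hBQ : ((Finset.univ.filter
      (fun ω : (j' : Fin t) → (Fin (kv j') → ↥(P j')) =>
        ∃ (j : Fin t) (i : Fin (kv j)), (ω j i : Fin n → F) ∈ M j (ω j) i)).card : ℝ)
      / (Fintype.card ((j' : Fin t) → (Fin (kv j') → ↥(P j'))) : ℝ)
      ≤ (∑ j ∈ Finset.range t, (kv j : ℝ)) / q :=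
    (div_le_div_iff₀ hΩR hqR).mpr hCB
  have hGB : ((Fintype.card ((j' : Fin t) → (Fin (kv j') → ↥(P j'))) : ℕ) : ℝ)
      ≤ ((Finset.univ.filter
          (fun ω : (j : Fin t) → (Fin (kv j) → ↥(P j)) =>
            ∀ k : Fin t,
              P 0 ⊓ (∑ a ∈ Finset.Iic k, Submodule.span F
                  (Set.range (fun b => (ω a b : Fin n → F))))
                = Submodule.span F
                    (Set.range (fun b => (ω (⟨0, ht⟩ : Fin t) b : Fin n → F))))).card : ℝ)
        + ((Finset.univ.filter
          (fun ω : (j' : Fin t) → (Fin (kv j') → ↥(P j')) =>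
            ∃ (j : Fin t) (i : Fin (kv j)), (ω j i : Fin n → F) ∈ M j (ω j) i)).card : ℝ) := by
    exact_mod_cast hgood
  have h6 : 1 - ((Finset.univ.filter
      (fun ω : (j' : Fin t) → (Fin (kv j') → ↥(P j')) =>
        ∃ (j : Fin t) (i : Fin (kv j)), (ω j i : Fin n → F) ∈ M j (ω j) i)).card : ℝ)
      / (Fintype.card ((j' : Fin t) → (Fin (kv j') → ↥(P j'))) : ℝ)
      ≤ ((Finset.univ.filter
          (fun ω : (j : Fin t) → (Fin (kv j) → ↥(P j)) =>
            ∀ k : Fin t,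
              P 0 ⊓ (∑ a ∈ Finset.Iic k, Submodule.span F
                  (Set.range (fun b => (ω a b : Fin n → F))))
                = Submodule.span F
                    (Set.range (fun b => (ω (⟨0, ht⟩ : Fin t) b : Fin n → F))))).card : ℝ)
        / (Fintype.card ((j' : Fin t) → (Fin (kv j') → ↥(P j'))) : ℝ) := by
    rw [sub_le_iff_le_add, ← add_div, le_div_iff₀ hΩR, one_mul]
    linarith
  linarith
end

section
/- The average pairwise subspace distance D_S satisfies the triangle inequality: for any nonempty finite sets A, B, C of subspaces of a finite-dimensional vector space V over a field, D_S(A, C) ≤ D_S(A, B) + D_S(B, C). -/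
/-- The subspace distance `d_S(Π₁, Π₂) = dim(Π₁ + Π₂) − dim(Π₁ ∩ Π₂)` (as an integer). -/
noncomputable def subspaceDist {K V : Type} [Field K] [AddCommGroup V] [Module K V]
    (S₁ S₂ : Submodule K V) : ℤ :=
  (Module.finrank K ↥(S₁ ⊔ S₂) : ℤ) - (Module.finrank K ↥(S₁ ⊓ S₂) : ℤ)

/-- The average pairwise subspace distance
`D_S(A,B) = (1/(|A||B|)) Σ_{π_a ∈ A, π_b ∈ B} d_S(π_a, π_b)`. -/
noncomputable def avgSubspaceDist {K V : Type} [Field K] [AddCommGroup V] [Module K V]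
    (A B : Finset (Submodule K V)) : ℝ :=
  (∑ a ∈ A, ∑ b ∈ B, (subspaceDist a b : ℝ)) / ((A.card : ℝ) * (B.card : ℝ))

lemma subspaceDist_eq {K V : Type} [Field K] [AddCommGroup V] [Module K V]
    [FiniteDimensional K V] (a b : Submodule K V) :
    subspaceDist a b = (Module.finrank K a : ℤ) + Module.finrank K b
      - 2 * Module.finrank K ↥(a ⊓ b) := by
  have h := Submodule.finrank_sup_add_finrank_inf_eq a b
  unfold subspaceDist
  omega

lemma subspaceDist_triangle {K V : Type} [Field K] [AddCommGroup V] [Module K V]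
    [FiniteDimensional K V] (a b c : Submodule K V) :
    subspaceDist a c ≤ subspaceDist a b + subspaceDist b c := by
  rw [subspaceDist_eq, subspaceDist_eq, subspaceDist_eq]
  have key : Module.finrank K ↥(a ⊓ b) + Module.finrank K ↥(b ⊓ c)
      ≤ Module.finrank K b + Module.finrank K ↥(a ⊓ c) := by
    have h := Submodule.finrank_sup_add_finrank_inf_eq (a ⊓ b) (b ⊓ c)
    have h1 : Module.finrank K ↥(a ⊓ b ⊔ b ⊓ c) ≤ Module.finrank K b :=
      Submodule.finrank_mono (sup_le inf_le_right inf_le_left)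
    have h2 : Module.finrank K ↥((a ⊓ b) ⊓ (b ⊓ c)) ≤ Module.finrank K ↥(a ⊓ c) :=
      Submodule.finrank_mono (le_inf (le_trans inf_le_left inf_le_left)
        (le_trans inf_le_right inf_le_right))
    omega
  omega

/-- the average pairwise subspace distance `D_S` satisfies the triangle
inequality: for nonempty finite sets `A, B, C` of subspaces of a finite-dimensional
vector space, `D_S(A, C) ≤ D_S(A, B) + D_S(B, C)`. -/
theorem stmt_11 (K V : Type) [Field K] [AddCommGroup V] [Module K V]
    [FiniteDimensional K V] (A B C : Finset (Submodule K V))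
    (hA : A.Nonempty) (hB : B.Nonempty) (hC : C.Nonempty) :
    avgSubspaceDist A C ≤ avgSubspaceDist A B + avgSubspaceDist B C := by
  have hA0 : (0:ℝ) < A.card := by exact_mod_cast Finset.card_pos.mpr hA
  have hB0 : (0:ℝ) < B.card := by exact_mod_cast Finset.card_pos.mpr hB
  have hC0 : (0:ℝ) < C.card := by exact_mod_cast Finset.card_pos.mpr hC
  unfold avgSubspaceDist
  rw [div_add_div _ _ (by positivity) (by positivity), div_le_div_iff₀ (by positivity) (by positivity)]
  have key : (B.card : ℝ) * ∑ a ∈ A, ∑ c ∈ C, (subspaceDist a c : ℝ)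
      ≤ (C.card : ℝ) * (∑ a ∈ A, ∑ b ∈ B, (subspaceDist a b : ℝ))
        + (A.card : ℝ) * (∑ b ∈ B, ∑ c ∈ C, (subspaceDist b c : ℝ)) := by
    have e1 : (B.card : ℝ) * ∑ a ∈ A, ∑ c ∈ C, (subspaceDist a c : ℝ)
        = ∑ a ∈ A, ∑ c ∈ C, ∑ _b ∈ B, (subspaceDist a c : ℝ) := by
      simp [Finset.sum_const, Finset.mul_sum, mul_comm]
    rw [e1]
    have step : ∑ a ∈ A, ∑ c ∈ C, ∑ b ∈ B, (subspaceDist a c : ℝ)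
        ≤ ∑ a ∈ A, ∑ c ∈ C, ∑ b ∈ B, ((subspaceDist a b : ℝ) + (subspaceDist b c : ℝ)) := by
      refine Finset.sum_le_sum fun a _ => Finset.sum_le_sum fun c _ =>
        Finset.sum_le_sum fun b _ => ?_
      exact_mod_cast subspaceDist_triangle a b c
    refine step.trans_eq ?_
    rw [Finset.mul_sum, Finset.mul_sum]
    simp only [Finset.sum_add_distrib]
    congr 1
    · refine Finset.sum_congr rfl fun a _ => ?_
      rw [Finset.sum_comm]
      simp [Finset.sum_const, Finset.mul_sum, mul_comm]
    · have e2 : ∑ a ∈ A, ∑ c ∈ C, ∑ b ∈ B, (subspaceDist b c : ℝ)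
          = ∑ a ∈ A, ∑ b ∈ B, ∑ c ∈ C, (subspaceDist b c : ℝ) :=
        Finset.sum_congr rfl fun a _ => Finset.sum_comm
      rw [e2, Finset.sum_const, nsmul_eq_mul, Finset.mul_sum]
  nlinarith [mul_le_mul_of_nonneg_left key
    (show (0:ℝ) ≤ (A.card:ℝ) * B.card * C.card by positivity)]
end

section
/- (Asymptotic rank distribution, claimed in the proof of Lemma 1.) Fix integers n ≥ 1, m ≥ 1 and 0 ≤ k ≤ min(m,n). There exists a constant C, depending only on n, m and k, such that for every prime power q the following holds: if Π is the span of m vectors chosen independently and uniformly at random from F_q^n, then | q^{(m−k)(n−k)} · Prob[dim(Π) = k] − 1 | ≤ C/q; i.e., Prob[dim(Π) = k] = q^{−(m−k)(n−k)} (1 − O(q^{−1})). -/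
open scoped Classical

open Module Submodule Set

section Aux

variable {F : Type} [Field F] [Fintype F]

/-- fibration counting lemma -/
lemma fiber_card {α β : Type*} [Finite α] [Finite β] (f : α → β) (c : ℕ)
    (h : ∀ b, Nat.card {a // f a = b} = c) : Nat.card α = Nat.card β * c := by
  cases nonempty_fintype α
  cases nonempty_fintype β
  calc Nat.card α = Nat.card (Σ b, {a // f a = b}) :=
        Nat.card_congr (Equiv.sigmaFiberEquiv f).symm
    _ = ∑ b : β, Nat.card {a // f a = b} := by
        simp only [Nat.card_eq_fintype_card, Fintype.card_sigma]
    _ = Nat.card β * c := by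
        have h' : ∀ b : β, Fintype.card {a // f a = b} = c := fun b => by
          rw [← Nat.card_eq_fintype_card]; exact h b
        simp [h', Nat.card_eq_fintype_card, mul_comm]

lemma span_val_eq {V : Type*} [AddCommGroup V] [Module F V] {ι : Type*}
    (W : Submodule F V) (w : ι → W) :
    span F (Set.range (fun j => (w j : V))) = Submodule.map W.subtype (span F (Set.range w)) := by
  rw [Submodule.map_span, ← Set.range_comp]
  rfl

lemma span_map_top_iff {V V₂ : Type*} [AddCommGroup V] [Module F V] [AddCommGroup V₂]
    [Module F V₂] {ι : Type*} (e : V ≃ₗ[F] V₂) (w : ι → V) :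
    span F (Set.range (fun j => e (w j))) = ⊤ ↔ span F (Set.range w) = ⊤ := by
  have : Set.range (fun j => e (w j)) = ⇑e.toLinearMap '' Set.range w := by
    rw [← Set.range_comp]; rfl
  rw [this, ← Submodule.map_span]
  constructor
  · intro h
    have h2 : Submodule.map e.toLinearMap (span F (Set.range w)) =
        Submodule.map e.toLinearMap ⊤ := by
      rw [h, Submodule.map_top, LinearEquiv.range]
    exact Submodule.map_injective_of_injective e.injective h2
  · intro h
    rw [h, Submodule.map_top, LinearEquiv.range]

/-- fiber of the span map over a `k`-dimensional subspace -/
noncomputable def spanFiberEquiv (n m k : ℕ) (W : Submodule F (Fin n → F))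
    (hW : finrank F W = k) :
    {v : Fin m → (Fin n → F) // span F (Set.range v) = W} ≃
      {w : Fin m → (Fin k → F) // span F (Set.range w) = ⊤} := by
  have inj := Submodule.map_injective_of_injective W.injective_subtype
  refine Equiv.trans (β := {w : Fin m → W // span F (Set.range w) = ⊤}) ?_ ?_
  · refine
      { toFun := fun v => ⟨fun j => ⟨v.1 j, by
          have : v.1 j ∈ span F (Set.range v.1) := subset_span (Set.mem_range_self j)
          rwa [v.2] at this⟩, ?_⟩
        invFun := fun w => ⟨fun j => (w.1 j : Fin n → F), by
          rw [span_val_eq, w.2, Submodule.map_subtype_top]⟩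
        left_inv := fun v => by ext j; rfl
        right_inv := fun w => by ext j; rfl }
    apply inj
    rw [← span_val_eq, Submodule.map_subtype_top]
    exact v.2
  · have e : W ≃ₗ[F] (Fin k → F) := (Module.finBasisOfFinrankEq F W hW).equivFun
    exact Equiv.subtypeEquiv (Equiv.arrowCongr (Equiv.refl (Fin m)) e.toEquiv)
      (fun w => by
        rw [show ⇑(Equiv.arrowCongr (Equiv.refl (Fin m)) e.toEquiv) w = fun j => e (w j) from rfl]
        exact (span_map_top_iff e w).symm)

/-- fiber of the span map on linearly independent tuples -/
noncomputable def liFiberEquiv (n k : ℕ) (W : Submodule F (Fin n → F))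
    (hW : finrank F W = k) :
    {u : Fin k → (Fin n → F) // LinearIndependent F u ∧ span F (Set.range u) = W} ≃
      {u : Fin k → (Fin k → F) // LinearIndependent F u} := by
  have inj := Submodule.map_injective_of_injective W.injective_subtype
  have hker : LinearMap.ker W.subtype = ⊥ := Submodule.ker_subtype W
  refine Equiv.trans (β := {w : Fin k → W // LinearIndependent F w}) ?_ ?_
  · refine
      { toFun := fun v => ⟨fun j => ⟨v.1 j, by
          have : v.1 j ∈ span F (Set.range v.1) := subset_span (Set.mem_range_self j)
          rwa [v.2.2] at this⟩, ?_⟩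
        invFun := fun w => ⟨fun j => (w.1 j : Fin n → F), ?_, ?_⟩
        left_inv := fun v => by ext j; rfl
        right_inv := fun w => by ext j; rfl }
    · -- LI of the codomain-restricted family
      apply LinearIndependent.of_comp W.subtype
      exact v.2.1
    · exact (W.subtype.linearIndependent_iff hker).mpr w.2
    · have hspan : span F (Set.range w.1) = ⊤ :=
        w.2.span_eq_top_of_card_eq_finrank' (by simp [hW])
      rw [span_val_eq, hspan, Submodule.map_subtype_top]
  · have e : W ≃ₗ[F] (Fin k → F) := (Module.finBasisOfFinrankEq F W hW).equivFun
    refine Equiv.subtypeEquiv (Equiv.arrowCongr (Equiv.refl (Fin k)) e.toEquiv)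
      (fun w => ?_)
    rw [show ⇑(Equiv.arrowCongr (Equiv.refl (Fin k)) e.toEquiv) w = ⇑e.toLinearMap ∘ w from rfl]
    exact (e.toLinearMap.linearIndependent_iff (LinearEquiv.ker e)).symm

lemma span_top_iff_li_transpose (m k : ℕ) (w : Fin m → (Fin k → F)) :
    span F (Set.range w) = ⊤ ↔ LinearIndependent F (fun i j => w j i) := by
  have hrank : (Matrix.of w).rank = finrank F (span F (Set.range w)) := by
    rw [Matrix.rank_eq_finrank_span_row]; rfl
  have hrank' : (Matrix.of w).rank = finrank F (span F (Set.range (fun i j => w j i))) := by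
    rw [Matrix.rank_eq_finrank_span_cols]; rfl
  rw [linearIndependent_iff_card_eq_finrank_span]
  unfold Set.finrank
  rw [← hrank', hrank, Fintype.card_fin]
  constructor
  · intro h; rw [h, finrank_top, Module.finrank_fintype_fun_eq_card, Fintype.card_fin]
  · intro h
    apply Submodule.eq_top_of_finrank_eq
    rw [← h, Module.finrank_fintype_fun_eq_card, Fintype.card_fin]

lemma card_span_top (m k : ℕ) (hk : k ≤ m) :
    Nat.card {w : Fin m → (Fin k → F) // span F (Set.range w) = ⊤} =
      ∏ i : Fin k, (Fintype.card F ^ m - Fintype.card F ^ (i : ℕ)) := by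
  have h1 : Nat.card {w : Fin m → (Fin k → F) // span F (Set.range w) = ⊤} =
      Nat.card {u : Fin k → (Fin m → F) // LinearIndependent F u} := by
    apply Nat.card_congr
    refine Equiv.subtypeEquiv (Equiv.piComm (fun _ _ => F)) (fun w => ?_)
    exact span_top_iff_li_transpose m k w
  rw [h1, card_linearIndependent]
  · rw [Module.finrank_fintype_fun_eq_card, Fintype.card_fin]
  · rw [Module.finrank_fintype_fun_eq_card, Fintype.card_fin]; exact hk

lemma card_li (n k : ℕ) (hk : k ≤ n) :
    Nat.card {u : Fin k → (Fin n → F) // LinearIndependent F u} =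
      ∏ i : Fin k, (Fintype.card F ^ n - Fintype.card F ^ (i : ℕ)) := by
  rw [card_linearIndependent]
  · rw [Module.finrank_fintype_fun_eq_card, Fintype.card_fin]
  · rw [Module.finrank_fintype_fun_eq_card, Fintype.card_fin]; exact hk

lemma count_main (n m k : ℕ) (hkm : k ≤ m) (hkn : k ≤ n) :
    Nat.card {v : Fin m → (Fin n → F) //
        finrank F (span F (Set.range v)) = k} *
      ∏ i : Fin k, (Fintype.card F ^ k - Fintype.card F ^ (i : ℕ)) =
    (∏ i : Fin k, (Fintype.card F ^ n - Fintype.card F ^ (i : ℕ))) *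
      ∏ i : Fin k, (Fintype.card F ^ m - Fintype.card F ^ (i : ℕ)) := by
  haveI : Finite (Submodule F (Fin n → F)) :=
    Finite.of_injective _ SetLike.coe_injective
  set G := {W : Submodule F (Fin n → F) // finrank F W = k} with hG
  -- card of rank-k tuples
  have hA : Nat.card {v : Fin m → (Fin n → F) // finrank F (span F (Set.range v)) = k} =
      Nat.card G *
        Nat.card {w : Fin m → (Fin k → F) // span F (Set.range w) = ⊤} := by
    apply fiber_card (fun v => (⟨span F (Set.range v.1), v.2⟩ : G))
    rintro ⟨W, hW⟩
    have e1 : {a : {v : Fin m → (Fin n → F) // finrank F (span F (Set.range v)) = k} //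
        (⟨span F (Set.range a.1), a.2⟩ : G) = ⟨W, hW⟩} ≃
        {v : Fin m → (Fin n → F) // span F (Set.range v) = W} :=
      { toFun := fun a => ⟨a.1.1, by have := congrArg Subtype.val a.2; exact this⟩
        invFun := fun v => ⟨⟨v.1, by rw [v.2]; exact hW⟩, by
          apply Subtype.ext; exact v.2⟩
        left_inv := fun a => by ext : 2; rfl
        right_inv := fun v => by ext : 1; rfl }
    rw [Nat.card_congr e1, Nat.card_congr (spanFiberEquiv n m k W hW)]
  -- card of linearly independent tuples
  have hB : Nat.card {u : Fin k → (Fin n → F) // LinearIndependent F u} =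
      Nat.card G *
        Nat.card {u : Fin k → (Fin k → F) // LinearIndependent F u} := by
    apply fiber_card (fun u => (⟨span F (Set.range u.1),
      by rw [finrank_span_eq_card u.2, Fintype.card_fin]⟩ : G))
    rintro ⟨W, hW⟩
    have e1 : {a : {u : Fin k → (Fin n → F) // LinearIndependent F u} //
        (⟨span F (Set.range a.1), by rw [finrank_span_eq_card a.2, Fintype.card_fin]⟩ : G)
          = ⟨W, hW⟩} ≃
        {u : Fin k → (Fin n → F) // LinearIndependent F u ∧ span F (Set.range u) = W} :=
      { toFun := fun a => ⟨a.1.1, a.1.2, by have := congrArg Subtype.val a.2; exact this⟩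
        invFun := fun u => ⟨⟨u.1, u.2.1⟩, by apply Subtype.ext; exact u.2.2⟩
        left_inv := fun a => by ext : 2; rfl
        right_inv := fun u => by ext : 1; rfl }
    rw [Nat.card_congr e1, Nat.card_congr (liFiberEquiv n k W hW)]
  have hS := card_span_top (F := F) m k hkm
  have hLIn := card_li (F := F) n k hkn
  have hLIkk := card_li (F := F) k k le_rfl
  rw [hA, hS, ← hLIn, hB, hLIkk]
  ring

lemma pow_one_add_le (k : ℕ) (t : ℝ) (h0 : 0 ≤ t) (h1 : t ≤ 1) :
    (1 + t) ^ k ≤ 1 + (2 ^ k - 1) * t := by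
  induction k with
  | zero => simp
  | succ k ih =>
    have hp : (1 : ℝ) ≤ 2 ^ k := by
      have := pow_le_pow_right₀ (by norm_num : (1:ℝ) ≤ 2) (Nat.zero_le k)
      simpa using this
    rw [pow_succ, pow_succ]
    have key : (0:ℝ) ≤ (2 ^ k - 1) * t * (1 - t) := by
      apply mul_nonneg (mul_nonneg (by linarith) h0) (by linarith)
    nlinarith [mul_le_mul_of_nonneg_right ih (by linarith : (0:ℝ) ≤ 1 + t)]

end Aux

set_option maxHeartbeats 1000000 in
/-- asymptotic rank distribution: for fixed `n, m, k` there is a constant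
`C` such that for every prime power `q` and every finite field `F` with `|F| = q`, the
span `Π` of `m` uniformly random vectors of `F^n` satisfies
`| q^{(m−k)(n−k)} · Prob[dim Π = k] − 1 | ≤ C/q`. -/
theorem stmt_14 (n m k : ℕ) (hn : 1 ≤ n) (hm : 1 ≤ m) (hk : k ≤ min m n) :
    ∃ C : ℝ, ∀ (q : ℕ), IsPrimePow q →
      ∀ (F : Type) [Field F] [Fintype F], Fintype.card F = q →
      |(q : ℝ) ^ ((m - k) * (n - k)) *
          (((Finset.univ.filter (fun v : Fin m → (Fin n → F) =>
              Module.finrank F ↥(Submodule.span F (Set.range v)) = k)).card : ℝ)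
            / (q : ℝ) ^ (m * n))
        - 1| ≤ C / q := by
  have hkm : k ≤ m := le_trans hk (min_le_left _ _)
  have hkn : k ≤ n := le_trans hk (min_le_right _ _)
  refine ⟨2 * k + 2 ^ (k + 1), ?_⟩
  intro q hq F _ _ hcard
  have hq2 : 2 ≤ q := hq.two_le
  have hqr2' : (2 : ℝ) ≤ (q : ℝ) := by exact_mod_cast hq2
  set qr : ℝ := (q : ℝ) with hqr
  have hqr2 : (2 : ℝ) ≤ qr := hqr2'
  have hqr0 : (0 : ℝ) < qr := by linarith
  have hqrne : qr ≠ 0 := ne_of_gt hqr0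
  set x : ℝ := qr⁻¹ with hx
  have hx0 : 0 < x := inv_pos.mpr hqr0
  have hxh : x ≤ 1 / 2 := by
    rw [hx]
    rw [inv_le_comm₀ (by linarith) (by norm_num)]
    simpa using hqr2
  set N : ℕ := (Finset.univ.filter (fun v : Fin m → (Fin n → F) =>
      Module.finrank F ↥(Submodule.span F (Set.range v)) = k)).card with hNdef
  -- the counting identity over ℕ
  have hN : N = Nat.card {v : Fin m → (Fin n → F) //
      finrank F (span F (Set.range v)) = k} := by
    rw [Nat.card_eq_fintype_card, Fintype.card_subtype]
  have hc := count_main (F := F) n m k hkm hkn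
  rw [hcard, ← hN] at hc
  -- cast to ℝ
  have hsub : ∀ (j : ℕ), k ≤ j → ∀ i : Fin k,
      ((q ^ j - q ^ (i : ℕ) : ℕ) : ℝ) = qr ^ j - qr ^ (i : ℕ) := by
    intro j hj i
    have hle : q ^ (i : ℕ) ≤ q ^ j := Nat.pow_le_pow_right (by omega) (by omega)
    rw [Nat.cast_sub hle, Nat.cast_pow, Nat.cast_pow]
  have hcR : (N : ℝ) * ∏ i : Fin k, (qr ^ k - qr ^ (i : ℕ)) =
      (∏ i : Fin k, (qr ^ n - qr ^ (i : ℕ))) * ∏ i : Fin k, (qr ^ m - qr ^ (i : ℕ)) := by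
    have := congrArg (Nat.cast : ℕ → ℝ) hc
    rw [Nat.cast_mul, Nat.cast_mul, Nat.cast_prod, Nat.cast_prod, Nat.cast_prod] at this
    rw [Finset.prod_congr rfl (fun i _ => hsub k le_rfl i),
        Finset.prod_congr rfl (fun i _ => hsub n hkn i),
        Finset.prod_congr rfl (fun i _ => hsub m hkm i)] at this
    exact this
  -- factor out powers of q
  set Q : ℕ → ℝ := fun j => ∏ i : Fin k, (1 - qr ^ (i : ℕ) / qr ^ j) with hQ
  have hfac : ∀ j : ℕ, ∏ i : Fin k, (qr ^ j - qr ^ (i : ℕ)) = qr ^ (j * k) * Q j := by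
    intro j
    have : ∀ i : Fin k, qr ^ j - qr ^ (i : ℕ) = qr ^ j * (1 - qr ^ (i : ℕ) / qr ^ j) := by
      intro i
      rw [mul_sub, mul_one, mul_div_cancel₀ _ (pow_ne_zero j hqrne)]
    rw [Finset.prod_congr rfl (fun i _ => this i), Finset.prod_mul_distrib,
      Finset.prod_const, Finset.card_univ, Fintype.card_fin, ← pow_mul]
  rw [hfac, hfac, hfac] at hcR
  -- bounds on Q j for j ≥ k
  have hfacbd : ∀ j : ℕ, k ≤ j → ∀ i : Fin k,
      1 - x ≤ 1 - qr ^ (i : ℕ) / qr ^ j ∧ 1 - qr ^ (i : ℕ) / qr ^ j ≤ 1 := by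
    intro j hj i
    have h1 : qr ^ ((i : ℕ) + 1) ≤ qr ^ j :=
      pow_le_pow_right₀ (by linarith) (by omega)
    have h2 : (0 : ℝ) < qr ^ j := pow_pos hqr0 j
    have h3 : (0 : ℝ) < qr ^ (i : ℕ) := pow_pos hqr0 _
    constructor
    · have : qr ^ (i : ℕ) / qr ^ j ≤ x := by
        rw [div_le_iff₀ h2, hx]
        have : qr⁻¹ * qr ^ ((i : ℕ) + 1) = qr ^ (i : ℕ) := by
          rw [pow_succ]
          field_simp
        nlinarith [mul_le_mul_of_nonneg_left h1 (inv_nonneg.mpr (le_of_lt hqr0))]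
      linarith
    · have : 0 ≤ qr ^ (i : ℕ) / qr ^ j := le_of_lt (div_pos h3 h2)
      linarith
  have hL0 : (0 : ℝ) < 1 - x := by linarith
  have hQub : ∀ j : ℕ, k ≤ j → Q j ≤ 1 := by
    intro j hj
    apply Finset.prod_le_one
    · intro i _
      have := hfacbd j hj i
      linarith [this.1]
    · intro i _
      exact (hfacbd j hj i).2
  have hQlb : ∀ j : ℕ, k ≤ j → (1 - x) ^ k ≤ Q j := by
    intro j hj
    have : (1 - x) ^ k = ∏ _i : Fin k, (1 - x) := by
      rw [Finset.prod_const, Finset.card_univ, Fintype.card_fin]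
    rw [this]
    apply Finset.prod_le_prod
    · intro i _; linarith
    · intro i _; exact (hfacbd j hj i).1
  have hLk0 : (0 : ℝ) < (1 - x) ^ k := pow_pos hL0 k
  have hQk0 : (0 : ℝ) < Q k := lt_of_lt_of_le hLk0 (hQlb k le_rfl)
  have hQn0 : (0 : ℝ) < Q n := lt_of_lt_of_le hLk0 (hQlb n hkn)
  have hQm0 : (0 : ℝ) < Q m := lt_of_lt_of_le hLk0 (hQlb m hkm)
  -- exponent identity
  have hexp : (m - k) * (n - k) + n * k + m * k = m * n + k * k := by
    obtain ⟨a, rfl⟩ := Nat.exists_eq_add_of_le hkm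
    obtain ⟨b, rfl⟩ := Nat.exists_eq_add_of_le hkn
    simp only [Nat.add_sub_cancel_left]
    ring
  -- the normalized ratio
  set R : ℝ := qr ^ ((m - k) * (n - k)) * ((N : ℝ) / qr ^ (m * n)) with hR
  have hE : R * Q k * qr ^ (m * n) * qr ^ (k * k) =
      Q n * Q m * qr ^ (m * n) * qr ^ (k * k) := by
    have e1 : R * Q k * qr ^ (m * n) * qr ^ (k * k) =
        qr ^ ((m - k) * (n - k)) * ((N : ℝ) * (qr ^ (k * k) * Q k)) *
          (qr ^ (m * n) / qr ^ (m * n)) := by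
      ring
    rw [e1, div_self (pow_ne_zero _ hqrne), mul_one, hcR]
    rw [show qr ^ ((m - k) * (n - k)) * (qr ^ (n * k) * Q n * (qr ^ (m * k) * Q m)) =
        Q n * Q m * (qr ^ ((m - k) * (n - k)) * qr ^ (n * k) * qr ^ (m * k)) from by ring]
    rw [← pow_add, ← pow_add, hexp, pow_add]
    ring
  have hA : R * Q k = Q n * Q m :=
    mul_right_cancel₀ (pow_ne_zero _ hqrne)
      (mul_right_cancel₀ (pow_ne_zero _ hqrne) hE)
  have hRval : R = Q n * Q m / Q k := by
    rw [eq_div_iff (ne_of_gt hQk0)]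
    exact hA
  -- upper bound
  have hRub : R ≤ 1 / (1 - x) ^ k := by
    rw [hRval]
    apply div_le_div₀ (by norm_num)
      (mul_le_one₀ (hQub n hkn) (le_of_lt hQm0) (hQub m hkm)) hLk0 (hQlb k le_rfl)
  -- lower bound
  have hRlb : (1 - x) ^ (2 * k) ≤ R := by
    rw [hRval]
    have h1 : Q n * Q m ≤ Q n * Q m / Q k := by
      rw [le_div_iff₀ hQk0]
      exact mul_le_of_le_one_right (mul_nonneg (le_of_lt hQn0) (le_of_lt hQm0))
        (hQub k le_rfl)
    have h2 : (1 - x) ^ (2 * k) ≤ Q n * Q m := by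
      rw [two_mul, pow_add]
      exact mul_le_mul (hQlb n hkn) (hQlb m hkm) (le_of_lt hLk0) (le_of_lt hQn0)
    linarith
  -- convert bounds to the final estimate
  have hCx : ((2 * k + 2 ^ (k + 1) : ℝ)) / qr = (2 * k + 2 ^ (k + 1) : ℝ) * x := by
    rw [hx, div_eq_mul_inv]
  rw [hCx]
  rw [abs_le]
  constructor
  · -- 1 - R ≤ C x
    have hber : 1 - (2 * k : ℝ) * x ≤ (1 - x) ^ (2 * k) := by
      have h := one_add_mul_le_pow (a := -x) (by linarith) (2 * k)
      rw [show (1 : ℝ) + -x = 1 - x from by ring] at h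
      push_cast at h ⊢
      linarith
    have : (0 : ℝ) ≤ (2 : ℝ) ^ (k + 1) * x := by positivity
    nlinarith [hRlb]
  · -- R - 1 ≤ C x
    have h1L : 1 / (1 - x) ≤ 1 + 2 * x := by
      rw [div_le_iff₀ hL0]
      nlinarith
    have h2 : 1 / (1 - x) ^ k ≤ (1 + 2 * x) ^ k := by
      rw [one_div, ← inv_pow, ← one_div]
      exact pow_le_pow_left₀ (by positivity) h1L k
    have h3 : (1 + 2 * x) ^ k ≤ 1 + (2 ^ k - 1) * (2 * x) :=
      pow_one_add_le k (2 * x) (by linarith) (by linarith)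
    have h4 : (0 : ℝ) < 2 ^ k := by positivity
    have h5 : (0 : ℝ) ≤ (k : ℝ) * x := by positivity
    have h6 : R ≤ 1 + (2 ^ k - 1) * (2 * x) := le_trans hRub (le_trans h2 h3)
    have h7 : ((2 : ℝ) ^ k - 1) * (2 * x) ≤ 2 ^ (k + 1) * x := by
      rw [pow_succ]
      nlinarith
    linarith
end
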